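/- arXiv:math/0405055 — 4 statements merged into one kernel-verified Lean document; each statement's English description precedes it below -/
import Mathlib

section
/- For every ε > 0 and every N ≥ 1 there exists a finite partition α of X into intervals such that var_A(g_N) < ‖g_N‖_∞ + ε for every A ∈ α. -/
open MeasureTheory Set

/-- The transfer operator `Pf(x) = ∑_{y ∈ X, T y = x} g(y) f(y)` on `X = [0,1]`. -/
noncomputable def transferOp (T g : ℝ → ℝ) (f : ℝ → ℝ) : ℝ → ℝ := fun x =>
  ∑' y : {y : ℝ // y ∈ Icc (0:ℝ) 1 ∧ T y = x}, g y.1 * f y.1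

/-- `g_N = (g ∘ T^{N-1}) ⋯ (g ∘ T) · g`; since `g` vanishes on `S`, this agrees with
the definition `g_N = 0` on `S_N`. -/
noncomputable def gIter (T g : ℝ → ℝ) (N : ℕ) : ℝ → ℝ := fun x =>
  ∏ k ∈ Finset.range N, g (T^[k] x)

/-- Supremum norm over `X = [0,1]`. -/
noncomputable def supNorm01 (f : ℝ → ℝ) : ℝ := sSup (f '' Icc 0 1)

/-- The set `S_N = ⋃_{k=0}^{N-1} T^{-k} S` (inside `X = [0,1]`). -/
def SIter (S : Set ℝ) (T : ℝ → ℝ) (N : ℕ) : Set ℝ :=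
  Icc 0 1 ∩ ⋃ k ∈ Finset.range N, T^[k] ⁻¹' S

/-- `U_N = X ∖ S_N`. -/
def UIter (S : Set ℝ) (T : ℝ → ℝ) (N : ℕ) : Set ℝ := Icc 0 1 \ SIter S T N

/-- `β_N`: the family of closures of the connected components of `U_N`. -/
def betaFam (S : Set ℝ) (T : ℝ → ℝ) (N : ℕ) : Set (Set ℝ) :=
  (fun x => closure (connectedComponentIn (UIter S T N) x)) '' UIter S T N

/-- Rychlik's setting: `X = [0,1]` with Lebesgue measure, `S ⊆ X` a closed null set
containing the endpoints, `U = X ∖ S`, `T : U → X` a map which on the closure of each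
connected component of `U` extends to a homeomorphism onto a subinterval of `X`, and
`g : X → [0,∞)` a bounded function of bounded variation vanishing on `S` such that the
transfer operator `P` preserves Lebesgue measure. -/
structure RychlikSystem where
  S : Set ℝ
  T : ℝ → ℝ
  g : ℝ → ℝ
  S_subset : S ⊆ Icc 0 1
  S_closed : IsClosed S
  S_null : volume S = 0
  zero_mem : (0:ℝ) ∈ S
  one_mem : (1:ℝ) ∈ S
  T_mapsTo : MapsTo T (Icc 0 1 \ S) (Icc 0 1)
  branch : ∀ x ∈ Icc (0:ℝ) 1 \ S, ∃ e : ℝ → ℝ,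
    EqOn e T (connectedComponentIn (Icc 0 1 \ S) x) ∧
    ContinuousOn e (closure (connectedComponentIn (Icc 0 1 \ S) x)) ∧
    InjOn e (closure (connectedComponentIn (Icc 0 1 \ S) x)) ∧
    e '' closure (connectedComponentIn (Icc 0 1 \ S) x) ⊆ Icc 0 1
  g_nonneg : ∀ x, 0 ≤ g x
  g_bdd : ∃ K, ∀ x, g x ≤ K
  g_bv : BoundedVariationOn g (Icc 0 1)
  g_zero_on_S : ∀ x ∈ S, g x = 0
  P_preserves : ∀ f : ℝ → ℝ, Measurable f → (∃ K, ∀ x, |f x| ≤ K) →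
    ∫ x in Icc (0:ℝ) 1, transferOp T g f x = ∫ x in Icc (0:ℝ) 1, f x




namespace RyAux

lemma edist_real (x y : ℝ) : edist x y = ENNReal.ofReal |x - y| := by
  rw [edist_dist, Real.dist_eq]

lemma edist_zero_right (x : ℝ) (hx : 0 ≤ x) : edist x 0 = ENNReal.ofReal x := by
  rw [edist_real]
  simp [abs_of_nonneg hx]

/-- variation additivity for plain `Icc`. -/
lemma var_Icc_add (f : ℝ → ℝ) {a b c : ℝ} (hab : a ≤ b) (hbc : b ≤ c) :
    eVariationOn f (Icc a b) + eVariationOn f (Icc b c) = eVariationOn f (Icc a c) := by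
  have := eVariationOn.Icc_add_Icc f (s := (univ : Set ℝ)) hab hbc (mem_univ b)
  simpa [univ_inter] using this

/-- two-point estimate -/
lemma edist_le_var (f : ℝ → ℝ) {a b : ℝ} (hab : a ≤ b) :
    edist (f a) (f b) ≤ eVariationOn f (Icc a b) :=
  eVariationOn.edist_le f (left_mem_Icc.2 hab) (right_mem_Icc.2 hab)

/-- chain lemma : sum of variations over a "chain" of subintervals of `[0,1]`,
indexed by a finite set in a linear order. -/
lemma sum_var_chain {ι : Type*} [LinearOrder ι] [DecidableEq ι] (f : ℝ → ℝ)
    (F : Finset ι) (c d : ι → ℝ)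
    (h0 : ∀ i ∈ F, 0 ≤ c i) (hcd : ∀ i ∈ F, c i ≤ d i) (hd1 : ∀ i ∈ F, d i ≤ 1)
    (hchain : ∀ i ∈ F, ∀ j ∈ F, i < j → d i ≤ c j) :
    ∑ i ∈ F, eVariationOn f (Icc (c i) (d i)) ≤ eVariationOn f (Icc 0 1) := by
  suffices H : ∀ z, 0 ≤ z → (∀ i ∈ F, d i ≤ z) →
      ∑ i ∈ F, eVariationOn f (Icc (c i) (d i)) ≤ eVariationOn f (Icc 0 z) by
    exact H 1 zero_le_one hd1
  induction F using Finset.induction_on_max with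
  | empty => intro z _ _; simp
  | insert j F hjF IH =>
    intro z hz hdz
    have hmemj : j ∈ insert j F := Finset.mem_insert_self j F
    have hsub : ∀ i ∈ F, i ∈ insert j F := fun i hi => Finset.mem_insert_of_mem hi
    rw [Finset.sum_insert (fun h => (lt_irrefl j (hjF j h)))]
    have IH' : ∑ i ∈ F, eVariationOn f (Icc (c i) (d i)) ≤ eVariationOn f (Icc 0 (c j)) := by
      refine IH (fun i hi => h0 i (hsub i hi)) (fun i hi => hcd i (hsub i hi))
        (fun i hi => ?_)
        (fun i hi i' hi' hii' => hchain i (hsub i hi) i' (hsub i' hi') hii')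
        (c j) (h0 j hmemj)
        (fun i hi => hchain i (hsub i hi) j hmemj (hjF i hi))
      · exact (hchain i (hsub i hi) j hmemj (hjF i hi)).trans ((hcd j hmemj).trans (hd1 j hmemj))
    calc eVariationOn f (Icc (c j) (d j)) + ∑ i ∈ F, eVariationOn f (Icc (c i) (d i))
        ≤ eVariationOn f (Icc (c j) (d j)) + eVariationOn f (Icc 0 (c j)) := by
          exact add_le_add_right IH' _
      _ = eVariationOn f (Icc 0 (d j)) := by
          rw [add_comm]; exact var_Icc_add f (h0 j hmemj) (hcd j hmemj)
      _ ≤ eVariationOn f (Icc 0 z) := eVariationOn.mono f (Icc_subset_Icc le_rfl (hdz j hmemj))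

end RyAux

namespace RyAux

lemma comp_ordConn (U : Set ℝ) (x : ℝ) : OrdConnected (connectedComponentIn U x) :=
  isPreconnected_connectedComponentIn.ordConnected

lemma comp_Icc_subset {U : Set ℝ} {x z z' : ℝ} (hz : z ∈ connectedComponentIn U x)
    (hz' : z' ∈ connectedComponentIn U x) : Icc z z' ⊆ connectedComponentIn U x :=
  (comp_ordConn U x).out hz hz'

lemma comp_eq {U : Set ℝ} {x y : ℝ} (h : y ∈ connectedComponentIn U x) :
    connectedComponentIn U x = connectedComponentIn U y := connectedComponentIn_eq h

lemma comp_nonempty {U : Set ℝ} {x : ℝ} (hx : x ∈ U) :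
    (connectedComponentIn U x).Nonempty := ⟨x, mem_connectedComponentIn hx⟩

lemma comp_bddBelow {U : Set ℝ} (hU : U ⊆ Icc 0 1) (x : ℝ) :
    BddBelow (connectedComponentIn U x) :=
  (((bddBelow_Icc (a := (1:ℝ)) (b := 0)).mono hU).mono (connectedComponentIn_subset U x))

lemma comp_bddAbove {U : Set ℝ} (hU : U ⊆ Icc 0 1) (x : ℝ) :
    BddAbove (connectedComponentIn U x) :=
  (((bddAbove_Icc (a := (0:ℝ)) (b := 1)).mono hU).mono (connectedComponentIn_subset U x))

lemma sInf_le_of_mem {U : Set ℝ} (hU : U ⊆ Icc 0 1) {x z : ℝ}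
    (hz : z ∈ connectedComponentIn U x) :
    sInf (connectedComponentIn U x) ≤ z := csInf_le (comp_bddBelow hU x) hz

lemma le_sSup_of_mem {U : Set ℝ} (hU : U ⊆ Icc 0 1) {x z : ℝ}
    (hz : z ∈ connectedComponentIn U x) :
    z ≤ sSup (connectedComponentIn U x) := le_csSup (comp_bddAbove hU x) hz

/-- The infimum of a component is not in `U`, but is in `[0,1]`. -/
lemma sInf_comp_not_mem {U : Set ℝ} (hUo : IsOpen U) (hU : U ⊆ Icc 0 1) {x : ℝ} (hx : x ∈ U) :
    sInf (connectedComponentIn U x) ∈ Icc (0:ℝ) 1 \ U := by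
  have hBne : (connectedComponentIn U x).Nonempty := comp_nonempty hx
  have hBbd : BddBelow (connectedComponentIn U x) := comp_bddBelow hU x
  have hBo : IsOpen (connectedComponentIn U x) := hUo.connectedComponentIn
  have hcl : sInf (connectedComponentIn U x) ∈ closure (connectedComponentIn U x) :=
    csInf_mem_closure hBne hBbd
  have hIcc : sInf (connectedComponentIn U x) ∈ Icc (0:ℝ) 1 := by
    have : closure (connectedComponentIn U x) ⊆ Icc 0 1 :=
      closure_minimal ((connectedComponentIn_subset U x).trans hU) isClosed_Icc
    exact this hcl
  refine ⟨hIcc, fun hmem => ?_⟩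
  have h1 : sInf (connectedComponentIn U x) ∈ connectedComponentIn U x := by
    have hoc : IsOpen (connectedComponentIn U (sInf (connectedComponentIn U x))) :=
      hUo.connectedComponentIn
    have hmc : sInf (connectedComponentIn U x)
        ∈ connectedComponentIn U (sInf (connectedComponentIn U x)) :=
      mem_connectedComponentIn hmem
    rcases mem_closure_iff.1 hcl _ hoc hmc with ⟨w, hw1, hw2⟩
    have heq : connectedComponentIn U (sInf (connectedComponentIn U x))
        = connectedComponentIn U x := (comp_eq hw1).trans (comp_eq hw2).symm
    rw [heq] at hmc; exact hmc
  rcases Metric.isOpen_iff.1 hBo _ h1 with ⟨r, hr, hball⟩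
  have h2 : sInf (connectedComponentIn U x) - r/2 ∈ connectedComponentIn U x := by
    apply hball
    rw [Real.ball_eq_Ioo, Set.mem_Ioo]
    constructor <;> nlinarith
  have := csInf_le hBbd h2
  nlinarith [this]

lemma sSup_comp_not_mem {U : Set ℝ} (hUo : IsOpen U) (hU : U ⊆ Icc 0 1) {x : ℝ} (hx : x ∈ U) :
    sSup (connectedComponentIn U x) ∈ Icc (0:ℝ) 1 \ U := by
  have hBne : (connectedComponentIn U x).Nonempty := comp_nonempty hx
  have hBbd : BddAbove (connectedComponentIn U x) := comp_bddAbove hU x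
  have hBo : IsOpen (connectedComponentIn U x) := hUo.connectedComponentIn
  have hcl : sSup (connectedComponentIn U x) ∈ closure (connectedComponentIn U x) :=
    csSup_mem_closure hBne hBbd
  have hIcc : sSup (connectedComponentIn U x) ∈ Icc (0:ℝ) 1 := by
    have : closure (connectedComponentIn U x) ⊆ Icc 0 1 :=
      closure_minimal ((connectedComponentIn_subset U x).trans hU) isClosed_Icc
    exact this hcl
  refine ⟨hIcc, fun hmem => ?_⟩
  have h1 : sSup (connectedComponentIn U x) ∈ connectedComponentIn U x := by
    have hoc : IsOpen (connectedComponentIn U (sSup (connectedComponentIn U x))) :=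
      hUo.connectedComponentIn
    have hmc : sSup (connectedComponentIn U x)
        ∈ connectedComponentIn U (sSup (connectedComponentIn U x)) :=
      mem_connectedComponentIn hmem
    rcases mem_closure_iff.1 hcl _ hoc hmc with ⟨w, hw1, hw2⟩
    have heq : connectedComponentIn U (sSup (connectedComponentIn U x))
        = connectedComponentIn U x := (comp_eq hw1).trans (comp_eq hw2).symm
    rw [heq] at hmc; exact hmc
  rcases Metric.isOpen_iff.1 hBo _ h1 with ⟨r, hr, hball⟩
  have h2 : sSup (connectedComponentIn U x) + r/2 ∈ connectedComponentIn U x := by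
    apply hball
    rw [Real.ball_eq_Ioo, Set.mem_Ioo]
    constructor <;> nlinarith
  have := le_csSup hBbd h2
  nlinarith [this]

/-- Components with equal infima coincide. -/
lemma comp_eq_of_sInf_eq {U : Set ℝ} (hUo : IsOpen U) (hU : U ⊆ Icc 0 1) {x y : ℝ}
    (hx : x ∈ U) (hy : y ∈ U)
    (h : sInf (connectedComponentIn U x) = sInf (connectedComponentIn U y)) :
    connectedComponentIn U x = connectedComponentIn U y := by
  have hxB : x ∈ connectedComponentIn U x := mem_connectedComponentIn hx
  have hyB : y ∈ connectedComponentIn U y := mem_connectedComponentIn hy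
  have haB : sInf (connectedComponentIn U x) ∉ connectedComponentIn U x :=
    fun hmem => (sInf_comp_not_mem hUo hU hx).2 (connectedComponentIn_subset U x hmem)
  have haB' : sInf (connectedComponentIn U y) ∉ connectedComponentIn U y :=
    fun hmem => (sInf_comp_not_mem hUo hU hy).2 (connectedComponentIn_subset U y hmem)
  have hax : sInf (connectedComponentIn U x) < x :=
    lt_of_le_of_ne (sInf_le_of_mem hU hxB) (fun he => haB (by rw [he]; exact hxB))
  have hay : sInf (connectedComponentIn U y) < y :=
    lt_of_le_of_ne (sInf_le_of_mem hU hyB) (fun he => haB' (by rw [he]; exact hyB))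
  have h1 : sInf (connectedComponentIn U x) < min x y := lt_min hax (h ▸ hay)
  have h2 : sInf (connectedComponentIn U y) < min x y := h ▸ h1
  rcases (csInf_lt_iff (comp_bddBelow hU x) (comp_nonempty hx)).1 h1 with ⟨w, hwB, hw⟩
  rcases (csInf_lt_iff (comp_bddBelow hU y) (comp_nonempty hy)).1 h2 with ⟨w', hwB', hw'⟩
  rcases le_total w w' with hle | hle
  · have hmem : w' ∈ connectedComponentIn U x :=
      comp_Icc_subset hwB hxB ⟨hle, hw'.le.trans (min_le_left x y)⟩
    exact (comp_eq hmem).trans (comp_eq hwB').symm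
  · have hmem : w ∈ connectedComponentIn U y :=
      comp_Icc_subset hwB' hyB ⟨hle, hw.le.trans (min_le_right x y)⟩
    exact (comp_eq hwB).trans (comp_eq hmem).symm

/-- Distinct components are ordered. -/
lemma sSup_le_sInf_of_lt {U : Set ℝ} (hU : U ⊆ Icc 0 1) {x y : ℝ}
    (hx : x ∈ U) (hy : y ∈ U)
    (h : sInf (connectedComponentIn U x) < sInf (connectedComponentIn U y)) :
    sSup (connectedComponentIn U x) ≤ sInf (connectedComponentIn U y) := by
  refine csSup_le (comp_nonempty hx) (fun z hz => ?_)
  by_contra hlt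
  push_neg at hlt
  rcases (csInf_lt_iff (comp_bddBelow hU y) (comp_nonempty hy)).1 hlt with ⟨w', hwB', hw'⟩
  have h2 : sInf (connectedComponentIn U x) < w' :=
    lt_of_lt_of_le h (csInf_le (comp_bddBelow hU y) hwB')
  rcases (csInf_lt_iff (comp_bddBelow hU x) (comp_nonempty hx)).1 h2 with ⟨w, hwB, hw⟩
  have hmem : w' ∈ connectedComponentIn U x := comp_Icc_subset hwB hz ⟨hw.le, hw'.le⟩
  have heq : connectedComponentIn U x = connectedComponentIn U y :=
    (comp_eq hmem).trans (comp_eq hwB').symm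
  rw [heq] at h
  exact lt_irrefl _ h

end RyAux


namespace RyAux

lemma Icc_subset_closure_comp {U : Set ℝ} (hU : U ⊆ Icc 0 1) {x : ℝ} (hx : x ∈ U) :
    Icc (sInf (connectedComponentIn U x)) (sSup (connectedComponentIn U x))
      ⊆ closure (connectedComponentIn U x) := by
  intro z hz
  rcases eq_or_lt_of_le hz.1 with h1 | h1
  · rw [← h1]
    exact csInf_mem_closure ⟨x, mem_connectedComponentIn hx⟩ (by exact ⟨0, fun w hw => (hU ((connectedComponentIn_subset U x) hw)).1⟩)
  rcases eq_or_lt_of_le hz.2 with h2 | h2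
  · rw [h2]
    exact csSup_mem_closure ⟨x, mem_connectedComponentIn hx⟩ (by exact ⟨1, fun w hw => (hU ((connectedComponentIn_subset U x) hw)).2⟩)
  · obtain ⟨w, hwC, hw⟩ := (csInf_lt_iff (⟨0, fun w hw => (hU ((connectedComponentIn_subset U x) hw)).1⟩) ⟨x, mem_connectedComponentIn hx⟩).1 h1
    obtain ⟨w', hwC', hw'⟩ := exists_lt_of_lt_csSup ⟨x, mem_connectedComponentIn hx⟩ h2
    exact subset_closure (comp_Icc_subset hwC hwC' ⟨hw.le, hw'.le⟩)

lemma gIter_nonneg {T g : ℝ → ℝ} (hg : ∀ x, 0 ≤ g x) (N : ℕ) (x : ℝ) :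
    0 ≤ gIter T g N x := Finset.prod_nonneg (fun k _ => hg _)

lemma gIter_le_pow {T g : ℝ → ℝ} {K : ℝ} (hg : ∀ x, 0 ≤ g x) (hK : ∀ x, g x ≤ K)
    (N : ℕ) (x : ℝ) : gIter T g N x ≤ K ^ N := by
  calc gIter T g N x ≤ ∏ _k ∈ Finset.range N, K :=
        Finset.prod_le_prod (fun k _ => hg _) (fun k _ => hK _)
    _ = K ^ N := by rw [Finset.prod_const, Finset.card_range]

lemma gIter_succ (T g : ℝ → ℝ) (N : ℕ) (x : ℝ) :
    gIter T g (N+1) x = g x * gIter T g N (T x) := by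
  unfold gIter
  rw [Finset.prod_range_succ']
  simp only [Function.iterate_succ_apply, Function.iterate_zero_apply]
  ring

end RyAux
namespace RyAux
open Set
open scoped Classical

set_option maxHeartbeats 1000000 in
lemma same_bound_aux (U : Set ℝ) (hUo : IsOpen U) (hU1 : U ⊆ Icc 0 1)
    (g gN : ℝ → ℝ) (hg0 : ∀ x, 0 ≤ g x) (hgz : ∀ z, z ∈ Icc (0:ℝ) 1 → z ∉ U → g z = 0)
    (h : ℝ → ℝ)
    (hbranch : ∀ x ∈ U, ∃ e : ℝ → ℝ,
      (∀ z ∈ connectedComponentIn U x, h z = gN (e z)) ∧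
      ContinuousOn e (closure (connectedComponentIn U x)) ∧
      InjOn e (closure (connectedComponentIn U x)) ∧
      e '' closure (connectedComponentIn U x) ⊆ Icc 0 1)
    (n : ℕ) (u : ℕ → ℝ) (hu : Monotone u) (hus : ∀ i, u i ∈ Icc 0 1)
    (Fs : Finset ℕ)
    (hFsmem : ∀ k ∈ Fs, k < n ∧ u k ∈ U ∧ u (k+1) ∈ connectedComponentIn U (u k))
    (hFsmem' : ∀ k, k < n → u k ∈ U → u (k+1) ∈ connectedComponentIn U (u k) → k ∈ Fs) :
    ∑ i ∈ Fs, ENNReal.ofReal (g (u (i+1))) * edist (h (u (i+1))) (h (u i))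
    ≤ eVariationOn g (Icc 0 1) * eVariationOn gN (Icc 0 1) := by
  classical
  set VN := eVariationOn gN (Icc (0:ℝ) 1) with hVN
  set φ : ℕ → ENNReal := fun i => ENNReal.ofReal (g (u (i+1)))
    * edist (h (u (i+1))) (h (u i)) with hφ
  set pick : ℝ → ℕ := fun a =>
    if hex : ∃ i ∈ Fs, sInf (connectedComponentIn U (u i)) = a then hex.choose else 0
    with hpickdef
  have hpickspec : ∀ a ∈ Fs.image (fun i => sInf (connectedComponentIn U (u i))),
      pick a ∈ Fs ∧ sInf (connectedComponentIn U (u (pick a))) = a := by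
    intro a ha
    obtain ⟨i, hi, hia⟩ := Finset.mem_image.1 ha
    have hex : ∃ i ∈ Fs, sInf (connectedComponentIn U (u i)) = a := ⟨i, hi, hia⟩
    rw [hpickdef]; dsimp only; rw [dif_pos hex]
    exact ⟨hex.choose_spec.1, hex.choose_spec.2⟩
  have hpickU : ∀ a ∈ Fs.image (fun i => sInf (connectedComponentIn U (u i))),
      u (pick a) ∈ U := by
    intro a ha
    exact (hFsmem _ (hpickspec a ha).1).2.1
  have fiber_bound : ∀ a ∈ Fs.image (fun i => sInf (connectedComponentIn U (u i))),
      ∑ i ∈ Fs.filter (fun i => sInf (connectedComponentIn U (u i)) = a), φ i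
        ≤ eVariationOn g (Icc (sInf (connectedComponentIn U (u (pick a))))
            (sSup (connectedComponentIn U (u (pick a))))) * VN := by
    intro a ha
    set G := Fs.filter (fun i => sInf (connectedComponentIn U (u i)) = a) with hG
    have hGne : G.Nonempty :=
      ⟨pick a, Finset.mem_filter.2 ⟨(hpickspec a ha).1, (hpickspec a ha).2⟩⟩
    have hcompG : ∀ k ∈ G,
        connectedComponentIn U (u k) = connectedComponentIn U (u (pick a)) := by
      intro k hk
      have hkU : u k ∈ U := (hFsmem _ (Finset.mem_filter.1 hk).1).2.1
      exact RyAux.comp_eq_of_sInf_eq hUo hU1 hkU (hpickU a ha)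
        (((Finset.mem_filter.1 hk).2).trans ((hpickspec a ha).2).symm)
    have hmemG : ∀ k ∈ G, u k ∈ connectedComponentIn U (u (pick a)) ∧
        u (k+1) ∈ connectedComponentIn U (u (pick a)) ∧ k < n := by
      intro k hk
      have hkFs := (Finset.mem_filter.1 hk).1
      obtain ⟨hkn, hkU, hkc⟩ := hFsmem _ hkFs
      exact ⟨by rw [← hcompG k hk]; exact mem_connectedComponentIn hkU,
        by rw [← hcompG k hk]; exact hkc, hkn⟩
    set lo := G.min' hGne with hlodef
    set hi := G.max' hGne with hhidef
    have hlo : lo ∈ G := G.min'_mem hGne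
    have hhi : hi ∈ G := G.max'_mem hGne
    have hlohi : lo ≤ hi := G.min'_le hi hhi
    have hconsec : ∀ k, lo ≤ k → k ≤ hi → k ∈ G := by
      intro k hk1 hk2
      have hval : u k ∈ connectedComponentIn U (u (pick a)) :=
        RyAux.comp_Icc_subset (hmemG lo hlo).1 (hmemG hi hhi).2.1
          ⟨hu hk1, hu (hk2.trans (Nat.le_succ hi))⟩
      have hval2 : u (k+1) ∈ connectedComponentIn U (u (pick a)) :=
        RyAux.comp_Icc_subset (hmemG lo hlo).1 (hmemG hi hhi).2.1
          ⟨hu (hk1.trans (Nat.le_succ k)), hu (Nat.succ_le_succ hk2)⟩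
      have hkU : u k ∈ U := connectedComponentIn_subset U _ hval
      have hcompk : connectedComponentIn U (u k) = connectedComponentIn U (u (pick a)) :=
        (RyAux.comp_eq hval).symm
      have hkFs : k ∈ Fs := hFsmem' k (lt_of_le_of_lt hk2 (hmemG hi hhi).2.2) hkU
        (by rw [hcompk]; exact hval2)
      refine Finset.mem_filter.2 ⟨hkFs, ?_⟩
      show sInf (connectedComponentIn U (u k)) = a
      rw [hcompk]
      exact (hpickspec a ha).2
    have hGIcc : G = Finset.Icc lo hi := by
      apply Finset.ext; intro k
      constructor
      · intro hk; exact Finset.mem_Icc.2 ⟨G.min'_le k hk, G.le_max' k hk⟩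
      · intro hk
        obtain ⟨h1, h2⟩ := Finset.mem_Icc.1 hk
        exact hconsec k h1 h2
    have hpts : ∀ k, lo ≤ k → k ≤ hi + 1 → u k ∈ connectedComponentIn U (u (pick a)) := by
      intro k h1 h2
      by_cases hk : k ≤ hi
      · exact (hmemG k (hconsec k h1 hk)).1
      · have hk' : k = hi + 1 := le_antisymm h2 (Nat.succ_le_of_lt (Nat.lt_of_not_le hk))
        rw [hk']; exact (hmemG hi hhi).2.1
    obtain ⟨e, hET, heC, heI, heIm⟩ := hbranch (u (pick a)) (hpickU a ha)
    have ha'b' : sInf (connectedComponentIn U (u (pick a)))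
        ≤ sSup (connectedComponentIn U (u (pick a))) :=
      le_trans (RyAux.sInf_le_of_mem hU1 (mem_connectedComponentIn (hpickU a ha)))
        (RyAux.le_sSup_of_mem hU1 (mem_connectedComponentIn (hpickU a ha)))
    have hBsub : connectedComponentIn U (u (pick a)) ⊆
        Icc (sInf (connectedComponentIn U (u (pick a))))
          (sSup (connectedComponentIn U (u (pick a)))) :=
      fun z hz => ⟨RyAux.sInf_le_of_mem hU1 hz, RyAux.le_sSup_of_mem hU1 hz⟩
    have hIccCl : Icc (sInf (connectedComponentIn U (u (pick a))))
        (sSup (connectedComponentIn U (u (pick a))))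
        ⊆ closure (connectedComponentIn U (u (pick a))) :=
      RyAux.Icc_subset_closure_comp hU1 (hpickU a ha)
    have hmapsto : MapsTo e (connectedComponentIn U (u (pick a))) (Icc 0 1) :=
      fun z hz => heIm (mem_image_of_mem e (subset_closure hz))
    have hvar_comp :
        eVariationOn (gN ∘ e) (connectedComponentIn U (u (pick a))) ≤ VN := by
      rcases ContinuousOn.strictMonoOn_of_injOn_Icc' ha'b' (heC.mono hIccCl)
        (heI.mono hIccCl) with hm | hm
      · exact eVariationOn.comp_le_of_monotoneOn _ e ((hm.monotoneOn).mono hBsub) hmapsto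
      · exact eVariationOn.comp_le_of_antitoneOn _ e ((hm.antitoneOn).mono hBsub) hmapsto
    have hsum_h : ∑ k ∈ G, edist (h (u (k+1))) (h (u k)) ≤ VN := by
      rw [hGIcc, ← Finset.Ico_add_one_right_eq_Icc, Finset.sum_Ico_eq_sum_range]
      have hterm : ∀ t, t < hi + 1 - lo →
          edist (h (u (lo + t + 1))) (h (u (lo + t)))
            = edist ((gN ∘ e) (u (lo + min (t+1) (hi + 1 - lo))))
                ((gN ∘ e) (u (lo + min t (hi + 1 - lo)))) := by
        intro t ht
        have e1 : min t (hi + 1 - lo) = t := min_eq_left ht.le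
        have e2 : min (t+1) (hi + 1 - lo) = t + 1 := min_eq_left (by omega)
        rw [e1, e2]
        have hm1 : u (lo + t) ∈ connectedComponentIn U (u (pick a)) :=
          hpts (lo + t) (Nat.le_add_right _ _) (by omega)
        have hm2 : u (lo + t + 1) ∈ connectedComponentIn U (u (pick a)) :=
          hpts (lo + t + 1) (by omega) (by omega)
        have hT1 : h (u (lo + t)) = (gN ∘ e) (u (lo + t)) := hET _ hm1
        have hT2 : h (u (lo + t + 1)) = (gN ∘ e) (u (lo + t + 1)) := hET _ hm2
        rw [hT1, hT2]
        rfl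
      calc ∑ t ∈ Finset.range (hi + 1 - lo), edist (h (u (lo + t + 1))) (h (u (lo + t)))
          = ∑ t ∈ Finset.range (hi + 1 - lo),
              edist ((gN ∘ e) (u (lo + min (t+1) (hi + 1 - lo))))
                ((gN ∘ e) (u (lo + min t (hi + 1 - lo)))) := by
            refine Finset.sum_congr rfl (fun t ht => ?_)
            exact hterm t (Finset.mem_range.1 ht)
        _ ≤ eVariationOn (gN ∘ e) (connectedComponentIn U (u (pick a))) := by
            refine eVariationOn.sum_le (f := gN ∘ e)
              (u := fun t => u (lo + min t (hi + 1 - lo))) (n := hi + 1 - lo)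
              (fun s t hst => hu (Nat.add_le_add_left (min_le_min hst (le_refl _)) lo))
              (fun t => ?_)
            refine hpts _ (Nat.le_add_right _ _) ?_
            have := min_le_right t (hi + 1 - lo)
            omega
        _ ≤ VN := hvar_comp
    have hterm_bound : ∀ k ∈ G, φ k
        ≤ eVariationOn g (Icc (sInf (connectedComponentIn U (u (pick a))))
            (sSup (connectedComponentIn U (u (pick a)))))
          * edist (h (u (k+1))) (h (u k)) := by
      intro k hk
      have hmem : u (k+1) ∈ connectedComponentIn U (u (pick a)) := (hmemG k hk).2.1
      have hinf := RyAux.sInf_comp_not_mem hUo hU1 (hpickU a ha)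
      have h0a' : g (sInf (connectedComponentIn U (u (pick a)))) = 0 :=
        hgz _ hinf.1 hinf.2
      have hfac : ENNReal.ofReal (g (u (k+1)))
          ≤ eVariationOn g (Icc (sInf (connectedComponentIn U (u (pick a))))
              (sSup (connectedComponentIn U (u (pick a))))) := by
        calc ENNReal.ofReal (g (u (k+1)))
            = edist (g (sInf (connectedComponentIn U (u (pick a))))) (g (u (k+1))) := by
              rw [edist_comm, RyAux.edist_real, h0a', sub_zero,
                abs_of_nonneg (hg0 _)]
          _ ≤ eVariationOn g (Icc (sInf (connectedComponentIn U (u (pick a)))) (u (k+1))) :=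
              RyAux.edist_le_var g (RyAux.sInf_le_of_mem hU1 hmem)
          _ ≤ _ := eVariationOn.mono g
              (Icc_subset_Icc le_rfl (RyAux.le_sSup_of_mem hU1 hmem))
      rw [hφ]; dsimp only
      exact mul_le_mul_left hfac _
    calc ∑ i ∈ G, φ i
        ≤ ∑ i ∈ G, eVariationOn g (Icc (sInf (connectedComponentIn U (u (pick a))))
            (sSup (connectedComponentIn U (u (pick a)))))
          * edist (h (u (i+1))) (h (u i)) := Finset.sum_le_sum hterm_bound
      _ = eVariationOn g (Icc (sInf (connectedComponentIn U (u (pick a))))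
            (sSup (connectedComponentIn U (u (pick a)))))
          * ∑ i ∈ G, edist (h (u (i+1))) (h (u i)) := by rw [Finset.mul_sum]
      _ ≤ _ := mul_le_mul_right hsum_h _
  calc ∑ i ∈ Fs, φ i
      = ∑ a ∈ Fs.image (fun i => sInf (connectedComponentIn U (u i))),
          ∑ i ∈ Fs.filter (fun i => sInf (connectedComponentIn U (u i)) = a), φ i :=
        (Finset.sum_fiberwise_of_maps_to (fun i hi => Finset.mem_image_of_mem _ hi) φ).symm
    _ ≤ ∑ a ∈ Fs.image (fun i => sInf (connectedComponentIn U (u i))),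
          eVariationOn g (Icc (sInf (connectedComponentIn U (u (pick a))))
            (sSup (connectedComponentIn U (u (pick a))))) * VN :=
        Finset.sum_le_sum fiber_bound
    _ = (∑ a ∈ Fs.image (fun i => sInf (connectedComponentIn U (u i))),
          eVariationOn g (Icc (sInf (connectedComponentIn U (u (pick a))))
            (sSup (connectedComponentIn U (u (pick a)))))) * VN :=
        (Finset.sum_mul _ _ _).symm
    _ ≤ eVariationOn g (Icc 0 1) * VN := by
        refine mul_le_mul_left ?_ VN
        refine RyAux.sum_var_chain g _
          (fun a => sInf (connectedComponentIn U (u (pick a))))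
          (fun a => sSup (connectedComponentIn U (u (pick a)))) ?_ ?_ ?_ ?_
        · intro a ha; exact (RyAux.sInf_comp_not_mem hUo hU1 (hpickU a ha)).1.1
        · intro a ha
          exact le_trans
            (RyAux.sInf_le_of_mem hU1 (mem_connectedComponentIn (hpickU a ha)))
            (RyAux.le_sSup_of_mem hU1 (mem_connectedComponentIn (hpickU a ha)))
        · intro a ha; exact (RyAux.sSup_comp_not_mem hUo hU1 (hpickU a ha)).1.2
        · intro a ha a' ha' haa'
          refine RyAux.sSup_le_sInf_of_lt hU1 (hpickU a ha) (hpickU a' ha') ?_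
          rw [(hpickspec a ha).2, (hpickspec a' ha').2]
          exact haa'

end RyAux

set_option maxHeartbeats 1000000 in
open scoped Classical in
lemma step (R : RychlikSystem) {K : ℝ} (hK : ∀ x, R.g x ≤ K) (N : ℕ) :
    eVariationOn (gIter R.T R.g (N+1)) (Icc 0 1) ≤
      eVariationOn R.g (Icc 0 1) * eVariationOn (gIter R.T R.g N) (Icc 0 1)
        + 3 * ENNReal.ofReal (K^N) * eVariationOn R.g (Icc 0 1) := by
  classical
  have hK0 : 0 ≤ K := le_trans (R.g_nonneg 0) (hK 0)
  set U : Set ℝ := Icc 0 1 \ R.S with hUdef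
  have hU1 : U ⊆ Icc 0 1 := diff_subset
  have hUo : IsOpen U := by
    have hEq : U = Ioo 0 1 \ R.S := by
      ext z
      constructor
      · rintro ⟨hz, hzS⟩
        refine ⟨⟨lt_of_le_of_ne hz.1 (fun h => hzS (h ▸ R.zero_mem)), lt_of_le_of_ne hz.2
          (fun h => hzS (h ▸ R.one_mem))⟩, hzS⟩
      · rintro ⟨hz, hzS⟩; exact ⟨Ioo_subset_Icc_self hz, hzS⟩
    rw [hEq]
    exact isOpen_Ioo.sdiff R.S_closed
  have hgS : ∀ z, z ∈ Icc (0:ℝ) 1 → z ∉ U → R.g z = 0 := by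
    intro z hz hzU
    refine R.g_zero_on_S z ?_
    by_contra hzS
    exact hzU ⟨hz, hzS⟩
  set g := R.g with hgdef
  set T := R.T with hTdef
  set v := eVariationOn g (Icc (0:ℝ) 1) with hv
  set VN := eVariationOn (gIter T g N) (Icc (0:ℝ) 1) with hVN
  set Kp := ENNReal.ofReal (K ^ N) with hKp
  have hKpow0 : (0:ℝ) ≤ K ^ N := pow_nonneg hK0 N
  set h : ℝ → ℝ := fun z => gIter T g N (T z) with hh
  have hgN1 : ∀ z, gIter T g (N+1) z = g z * h z := fun z => RyAux.gIter_succ T g N z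
  have hh0 : ∀ z, 0 ≤ h z := fun z => RyAux.gIter_nonneg R.g_nonneg N (T z)
  have hhK : ∀ z, h z ≤ K ^ N := fun z => RyAux.gIter_le_pow R.g_nonneg hK N (T z)
  refine iSup_le ?_
  rintro ⟨n, u, hu, hus⟩
  dsimp only
  set Fs := (Finset.range n).filter
      (fun i => u i ∈ U ∧ u (i+1) ∈ connectedComponentIn U (u i)) with hFs
  set Fc := (Finset.range n).filter
      (fun i => ¬ (u i ∈ U ∧ u (i+1) ∈ connectedComponentIn U (u i))) with hFc
  set ψ : ℕ → ENNReal := fun i => edist (gIter T g (N+1) (u (i+1))) (gIter T g (N+1) (u i))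
    with hψ
  set φ : ℕ → ENNReal := fun i => ENNReal.ofReal (g (u (i+1)))
    * edist (h (u (i+1))) (h (u i)) with hφ
  -- the pair-term bound in the "same component" case
  have tb_same : ∀ i, ψ i ≤ φ i + Kp * edist (g (u (i+1))) (g (u i)) := by
    intro i
    have habs : |g (u (i+1)) * h (u (i+1)) - g (u i) * h (u i)|
        ≤ g (u (i+1)) * |h (u (i+1)) - h (u i)| + |g (u (i+1)) - g (u i)| * K ^ N := by
      have hrw : g (u (i+1)) * h (u (i+1)) - g (u i) * h (u i)
          = g (u (i+1)) * (h (u (i+1)) - h (u i)) + (g (u (i+1)) - g (u i)) * h (u i) := by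
        ring
      rw [hrw]
      refine (abs_add_le _ _).trans ?_
      rw [abs_mul, abs_mul, abs_of_nonneg (R.g_nonneg (u (i+1))), abs_of_nonneg (hh0 (u i))]
      have hmm := mul_le_mul_of_nonneg_left (hhK (u i)) (abs_nonneg (g (u (i+1)) - g (u i)))
      linarith
    calc ψ i = ENNReal.ofReal
          |g (u (i+1)) * h (u (i+1)) - g (u i) * h (u i)| := by
          rw [hψ]; dsimp only; rw [hgN1, hgN1, RyAux.edist_real]
      _ ≤ ENNReal.ofReal (g (u (i+1)) * |h (u (i+1)) - h (u i)|
            + |g (u (i+1)) - g (u i)| * K ^ N) := ENNReal.ofReal_le_ofReal habs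
      _ ≤ ENNReal.ofReal (g (u (i+1)) * |h (u (i+1)) - h (u i)|)
            + ENNReal.ofReal (|g (u (i+1)) - g (u i)| * K ^ N) := ENNReal.ofReal_add_le
      _ = φ i + Kp * edist (g (u (i+1))) (g (u i)) := by
          rw [hφ]; dsimp only
          rw [RyAux.edist_real (h (u (i+1))) (h (u i)), RyAux.edist_real (g (u (i+1))) (g (u i)),
            ENNReal.ofReal_mul (R.g_nonneg (u (i+1))), ENNReal.ofReal_mul (abs_nonneg _),
            hKp, mul_comm (ENNReal.ofReal |g (u (i+1)) - g (u i)|)]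
  -- choice of a separating zero for crossing pairs
  have hcross : ∀ i, ∃ s : ℝ, i ∈ Fc →
      u i ≤ s ∧ s ≤ u (i+1) ∧ g s = 0 ∧ 0 ≤ s ∧ s ≤ 1 := by
    intro i
    by_cases hi : i ∈ Fc
    · have hnot : ¬ (u i ∈ U ∧ u (i+1) ∈ connectedComponentIn U (u i)) :=
        (Finset.mem_filter.1 hi).2
      have hmono : u i ≤ u (i+1) := hu (Nat.le_succ i)
      by_cases hxU : u i ∈ U
      · have hnot2 : u (i+1) ∉ connectedComponentIn U (u i) := by
          intro hmem; exact hnot ⟨hxU, hmem⟩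
        refine ⟨sSup (connectedComponentIn U (u i)), fun _ => ?_⟩
        have hsup := RyAux.sSup_comp_not_mem hUo hU1 hxU
        refine ⟨RyAux.le_sSup_of_mem hU1 (mem_connectedComponentIn hxU), ?_,
          hgS _ hsup.1 hsup.2, hsup.1.1, hsup.1.2⟩
        refine csSup_le (RyAux.comp_nonempty hxU) (fun z hz => ?_)
        by_contra hzgt
        push_neg at hzgt
        exact hnot2 (RyAux.comp_Icc_subset (mem_connectedComponentIn hxU) hz
          ⟨hmono, hzgt.le⟩)
      · exact ⟨u i, fun _ => ⟨le_rfl, hmono, hgS _ (hus i) hxU, (hus i).1, (hus i).2⟩⟩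
    · exact ⟨0, fun hmem => absurd hmem hi⟩
  choose sp hsp using hcross
  have tb_cross : ∀ i ∈ Fc, ψ i ≤
      Kp * (edist (g (u i)) (g (sp i)) + edist (g (sp i)) (g (u (i+1)))) := by
    intro i hi
    obtain ⟨h1, h2, h3, h4, h5⟩ := hsp i hi
    have hb1 : edist (g (u i)) (g (sp i)) = ENNReal.ofReal (g (u i)) := by
      rw [RyAux.edist_real, h3, sub_zero, abs_of_nonneg (R.g_nonneg _)]
    have hb2 : edist (g (sp i)) (g (u (i+1))) = ENNReal.ofReal (g (u (i+1))) := by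
      rw [edist_comm, RyAux.edist_real, h3, sub_zero, abs_of_nonneg (R.g_nonneg _)]
    rw [hb1, hb2, ← ENNReal.ofReal_add (R.g_nonneg (u i)) (R.g_nonneg (u (i+1)))]
    have habs : |g (u (i+1)) * h (u (i+1)) - g (u i) * h (u i)|
        ≤ (g (u i) + g (u (i+1))) * K ^ N := by
      have h1' : |g (u (i+1)) * h (u (i+1)) - g (u i) * h (u i)|
          ≤ g (u (i+1)) * h (u (i+1)) + g (u i) * h (u i) := by
        refine (abs_sub _ _).trans ?_
        rw [abs_of_nonneg (mul_nonneg (R.g_nonneg _) (hh0 _)),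
          abs_of_nonneg (mul_nonneg (R.g_nonneg _) (hh0 _))]
      refine h1'.trans ?_
      have hx1 := hhK (u i); have hy1 := hhK (u (i+1))
      have hx2 := R.g_nonneg (u i); have hy2 := R.g_nonneg (u (i+1))
      have hx3 := hh0 (u i); have hy3 := hh0 (u (i+1))
      nlinarith
    calc ψ i = ENNReal.ofReal
          |g (u (i+1)) * h (u (i+1)) - g (u i) * h (u i)| := by
          rw [hψ]; dsimp only; rw [hgN1, hgN1, RyAux.edist_real]
      _ ≤ ENNReal.ofReal ((g (u i) + g (u (i+1))) * K ^ N) := ENNReal.ofReal_le_ofReal habs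
      _ = Kp * ENNReal.ofReal (g (u i) + g (u (i+1))) := by
          rw [ENNReal.ofReal_mul (add_nonneg (R.g_nonneg _) (R.g_nonneg _)), hKp, mul_comm]
  -- total bound on the crossing part
  have cross_bound : ∑ i ∈ Fc, ψ i ≤ Kp * (v + v) := by
    calc ∑ i ∈ Fc, ψ i
        ≤ ∑ i ∈ Fc, Kp * (edist (g (u i)) (g (sp i)) + edist (g (sp i)) (g (u (i+1)))) :=
          Finset.sum_le_sum tb_cross
      _ = Kp * (∑ i ∈ Fc, edist (g (u i)) (g (sp i))
            + ∑ i ∈ Fc, edist (g (sp i)) (g (u (i+1)))) := by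
          rw [← Finset.sum_add_distrib, Finset.mul_sum]
      _ ≤ Kp * (v + v) := by
          refine mul_le_mul_right (add_le_add ?_ ?_) Kp
          · calc ∑ i ∈ Fc, edist (g (u i)) (g (sp i))
                ≤ ∑ i ∈ Fc, eVariationOn g (Icc (u i) (sp i)) :=
                  Finset.sum_le_sum (fun i hi => RyAux.edist_le_var g (hsp i hi).1)
              _ ≤ v := by
                  refine RyAux.sum_var_chain g Fc u sp (fun i _ => (hus i).1)
                    (fun i hi => (hsp i hi).1) (fun i hi => (hsp i hi).2.2.2.2) ?_
                  intro i hi j hj hij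
                  exact (hsp i hi).2.1.trans (hu (Nat.succ_le_of_lt hij))
          · calc ∑ i ∈ Fc, edist (g (sp i)) (g (u (i+1)))
                ≤ ∑ i ∈ Fc, eVariationOn g (Icc (sp i) (u (i+1))) :=
                  Finset.sum_le_sum (fun i hi => RyAux.edist_le_var g (hsp i hi).2.1)
              _ ≤ v := by
                  refine RyAux.sum_var_chain g Fc sp (fun i => u (i+1))
                    (fun i hi => (hsp i hi).2.2.2.1) (fun i hi => (hsp i hi).2.1)
                    (fun i _ => (hus (i+1)).2) ?_
                  intro i hi j hj hij
                  exact (hu (Nat.succ_le_of_lt hij)).trans (hsp j hj).1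
  -- the component-sum bound for the same part
  have hbranch : ∀ x ∈ U, ∃ e : ℝ → ℝ,
      (∀ z ∈ connectedComponentIn U x, h z = gIter T g N (e z)) ∧
      ContinuousOn e (closure (connectedComponentIn U x)) ∧
      InjOn e (closure (connectedComponentIn U x)) ∧
      e '' closure (connectedComponentIn U x) ⊆ Icc 0 1 := by
    intro x hx
    obtain ⟨e, hET, heC, heI, heIm⟩ := R.branch x hx
    rw [← hUdef] at hET heC heI heIm
    rw [← hTdef] at hET
    refine ⟨e, fun z hz => ?_, heC, heI, heIm⟩
    show gIter T g N (T z) = gIter T g N (e z)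
    rw [hET hz]
  have same_bound : ∑ i ∈ Fs, φ i ≤ v * VN := by
    refine RyAux.same_bound_aux U hUo hU1 g (gIter T g N) R.g_nonneg hgS h hbranch
      n u hu hus Fs ?_ ?_
    · intro k hk
      rw [hFs, Finset.mem_filter, Finset.mem_range] at hk
      exact ⟨hk.1, hk.2.1, hk.2.2⟩
    · intro k h1 h2 h3
      rw [hFs, Finset.mem_filter, Finset.mem_range]
      exact ⟨h1, h2, h3⟩
  -- assembling
  have split : ∑ i ∈ Finset.range n, ψ i = ∑ i ∈ Fs, ψ i + ∑ i ∈ Fc, ψ i :=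
    (Finset.sum_filter_add_sum_filter_not _ _ _).symm
  have sum_g_le : ∑ i ∈ Finset.range n, edist (g (u (i+1))) (g (u i)) ≤ v :=
    eVariationOn.sum_le (f := g) (n := n) hu hus
  have same_part : ∑ i ∈ Fs, ψ i ≤ v * VN + Kp * v := by
    calc ∑ i ∈ Fs, ψ i
        ≤ ∑ i ∈ Fs, (φ i + Kp * edist (g (u (i+1))) (g (u i))) :=
          Finset.sum_le_sum (fun i _ => tb_same i)
      _ = ∑ i ∈ Fs, φ i + ∑ i ∈ Fs, Kp * edist (g (u (i+1))) (g (u i)) :=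
          Finset.sum_add_distrib
      _ ≤ v * VN + Kp * v := by
          refine add_le_add same_bound ?_
          rw [← Finset.mul_sum]
          refine mul_le_mul_right ?_ Kp
          exact le_trans (Finset.sum_le_sum_of_subset (Finset.filter_subset _ _)) sum_g_le
  calc ∑ i ∈ Finset.range n, ψ i = ∑ i ∈ Fs, ψ i + ∑ i ∈ Fc, ψ i := split
    _ ≤ (v * VN + Kp * v) + Kp * (v + v) := add_le_add same_part cross_bound
    _ = v * VN + 3 * Kp * v := by ring

lemma gIter_bv (R : RychlikSystem) (N : ℕ) :
    eVariationOn (gIter R.T R.g N) (Icc 0 1) ≠ ⊤ := by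
  induction N with
  | zero =>
    have hz : eVariationOn (gIter R.T R.g 0) (Icc 0 1) = 0 := by
      apply eVariationOn.constant_on
      intro x hx y hy
      obtain ⟨x', _, rfl⟩ := hx
      obtain ⟨y', _, rfl⟩ := hy
      simp [gIter]
    rw [hz]; exact ENNReal.zero_ne_top
  | succ N ih =>
    obtain ⟨K, hK⟩ := R.g_bdd
    refine ne_top_of_le_ne_top ?_ (step R hK N)
    exact ENNReal.add_ne_top.2 ⟨ENNReal.mul_ne_top R.g_bv ih,
      ENNReal.mul_ne_top (ENNReal.mul_ne_top (by simp) ENNReal.ofReal_ne_top) R.g_bv⟩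

namespace RyAux

/-- Left local variation bound. -/
lemma left_small (f : ℝ → ℝ) {M ε : ℝ} (hM : ∀ z ∈ Icc (0:ℝ) 1, f z ∈ Icc 0 M)
    (hε : 0 < ε) (hfin : eVariationOn f (Icc (0:ℝ) 1) ≠ ⊤) {x : ℝ} (hx : x ∈ Ioc (0:ℝ) 1) :
    ∃ a, a ∈ Ico (0:ℝ) x ∧ eVariationOn f (Icc a x) < ENNReal.ofReal (M + ε) := by
  classical
  set δ := ENNReal.ofReal ε / 4 with hδ
  have hδ0 : 0 < δ := ENNReal.div_pos (by simp [hε, ENNReal.ofReal_pos]) (by norm_num)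
  have hδtop : δ ≠ ⊤ := (ENNReal.div_lt_top ENNReal.ofReal_ne_top (by norm_num)).ne
  have h4δ : 4 * δ = ENNReal.ofReal ε := by
    rw [hδ]
    exact ENNReal.mul_div_cancel' (by norm_num) (by norm_num)
  have hM0 : 0 ≤ M := by
    have h := hM 0 (by constructor <;> norm_num)
    exact h.1.trans h.2
  have hedistM : ∀ p q : ℝ, p ∈ Icc (0:ℝ) 1 → q ∈ Icc (0:ℝ) 1 →
      edist (f p) (f q) ≤ ENNReal.ofReal M := by
    intro p q hp hq
    rw [RyAux.edist_real]
    apply ENNReal.ofReal_le_ofReal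
    have h1 := hM p hp; have h2 := hM q hq
    rw [abs_le]
    constructor
    · nlinarith [h1.1, h2.2]
    · nlinarith [h1.2, h2.1]
  set I := ⨅ a : Ico (0:ℝ) x, eVariationOn f (Icc a.1 x) with hI
  have hItop : I ≠ ⊤ := by
    refine ne_top_of_le_ne_top hfin ?_
    refine le_trans (iInf_le _ ⟨0, le_rfl, hx.1⟩) ?_
    exact eVariationOn.mono f (Icc_subset_Icc le_rfl hx.2)
  obtain ⟨⟨a, ha⟩, hvar⟩ : ∃ a : Ico (0:ℝ) x, eVariationOn f (Icc a.1 x) < I + δ := by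
    rw [← iInf_lt_iff, ← hI]
    exact ENNReal.lt_add_right hItop (ne_of_gt hδ0)
  have hIccsub : Icc a x ⊆ Icc (0:ℝ) 1 := Icc_subset_Icc ha.1 hx.2
  -- key claim
  have hclaim : I ≤ ENNReal.ofReal M + 2 * δ := by
    by_contra hcon
    push_neg at hcon
    set var := eVariationOn f (Icc a x) with hvardef
    have hvarI : I ≤ var := iInf_le (fun a : Ico (0:ℝ) x => eVariationOn f (Icc a.1 x)) ⟨a, ha⟩
    have hvartop : var ≠ ⊤ := ne_top_of_lt hvar
    have hvar0 : var ≠ 0 := by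
      intro h0
      have h1 : I = 0 := le_antisymm (h0 ▸ hvarI) bot_le
      rw [h1] at hcon
      exact absurd hcon (by simp)
    have hsub : var - δ < var := ENNReal.sub_lt_self hvartop hvar0 (ne_of_gt hδ0)
    obtain ⟨⟨m, w, hw, hws⟩, hsum⟩ :
        ∃ p : ℕ × { u : ℕ → ℝ // Monotone u ∧ ∀ i, u i ∈ Icc a x },
          var - δ < ∑ i ∈ Finset.range p.1, edist (f (p.2.1 (i+1))) (f (p.2.1 i)) := by
      rw [← lt_iSup_iff]
      exact hsub
    have hmain : ∃ a' : ℝ, a ≤ a' ∧ a' < x ∧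
        var - δ ≤ eVariationOn f (Icc a a') + ENNReal.ofReal M := by
      by_cases hex : ∃ j, x ≤ w j
      · set j1 := Nat.find hex with hj1def
        have hj1x : w j1 = x := le_antisymm (hws j1).2 (Nat.find_spec hex)
        have hterm0 : ∀ i, j1 ≤ i → edist (f (w (i+1))) (f (w i)) = 0 := by
          intro i hi
          have h1 : w i = x := le_antisymm (hws i).2 (by rw [← hj1x]; exact hw hi)
          have h2 : w (i+1) = x := le_antisymm (hws (i+1)).2
            (by rw [← hj1x]; exact hw (hi.trans (Nat.le_succ i)))
          rw [h1, h2, edist_self]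
        have hj1pos : 0 < j1 := by
          rcases Nat.eq_zero_or_pos j1 with h0 | h0
          · exfalso
            have hz : ∑ i ∈ Finset.range m, edist (f (w (i+1))) (f (w i)) = 0 :=
              Finset.sum_eq_zero (fun i _ => hterm0 i (h0 ▸ Nat.zero_le i))
            rw [hz] at hsum
            exact absurd hsum (by simp)
          · exact h0
        set a' := w (j1 - 1) with ha'def
        have ha'lt : a' < x := by
          have hmin := Nat.find_min hex (Nat.sub_lt hj1pos one_pos)
          push_neg at hmin
          exact hmin
        refine ⟨a', (hws _).1, ha'lt, ?_⟩
        refine le_trans hsum.le ?_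
        rcases le_or_gt m (j1 - 1) with hcase | hcase
        · -- whole sum within [a, a']
          refine le_trans (eVariationOn.sum_le_of_monotoneOn_Iic (f := f) (s := Icc a a') (hw.monotoneOn _)
            (fun i hi => ⟨(hws i).1, hw (hi.trans hcase)⟩)) le_self_add
        · -- split
          have hj1m : j1 ≤ m := by omega
          have hstep : (j1 - 1) + 1 = j1 := by omega
          calc ∑ i ∈ Finset.range m, edist (f (w (i+1))) (f (w i))
              = ∑ i ∈ Finset.range j1, edist (f (w (i+1))) (f (w i)) := by
                rw [← Finset.sum_range_add_sum_Ico _ hj1m]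
                have hz : ∑ i ∈ Finset.Ico j1 m, edist (f (w (i+1))) (f (w i)) = 0 :=
                  Finset.sum_eq_zero
                    (fun i hi => hterm0 i (Finset.mem_Ico.1 hi).1)
                rw [hz, add_zero]
            _ = ∑ i ∈ Finset.range (j1 - 1), edist (f (w (i+1))) (f (w i))
                  + edist (f (w j1)) (f a') := by
                rw [← hstep, Finset.sum_range_succ, hstep]
            _ ≤ eVariationOn f (Icc a a') + ENNReal.ofReal M := by
                refine add_le_add ?_ ?_
                · refine eVariationOn.sum_le_of_monotoneOn_Iic (f := f) (hw.monotoneOn _) ?_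
                  intro i hi
                  exact ⟨(hws i).1, hw (by omega)⟩
                · exact hedistM _ _ (hIccsub (hws j1)) (hIccsub (hws (j1-1)))
      · push_neg at hex
        refine ⟨w m, (hws m).1, hex m, ?_⟩
        refine le_trans hsum.le ?_
        refine le_trans (eVariationOn.sum_le_of_monotoneOn_Iic (f := f) (s := Icc a (w m)) (hw.monotoneOn _)
          (fun i hi => ⟨(hws i).1, hw hi⟩)) le_self_add
    obtain ⟨a', haa', ha'x, hS⟩ := hmain
    have hvarsplit : eVariationOn f (Icc a a') + eVariationOn f (Icc a' x) = var :=
      RyAux.var_Icc_add f haa' ha'x.le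
    have hI2 : I ≤ eVariationOn f (Icc a' x) := iInf_le (fun a : Ico (0:ℝ) x => eVariationOn f (Icc a.1 x)) ⟨a', ha.1.trans haa', ha'x⟩
    have hsmall : eVariationOn f (Icc a a') < δ := by
      have h1 : eVariationOn f (Icc a a') + I < δ + I := by
        calc eVariationOn f (Icc a a') + I
            ≤ eVariationOn f (Icc a a') + eVariationOn f (Icc a' x) := add_le_add_right hI2 _
          _ = var := hvarsplit
          _ < I + δ := hvar
          _ = δ + I := add_comm _ _
      exact (ENNReal.add_lt_add_iff_right hItop).1 h1
    have hfinal : I ≤ ENNReal.ofReal M + 2 * δ := by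
      calc I ≤ var := hvarI
        _ ≤ (var - δ) + δ := le_tsub_add
        _ ≤ (eVariationOn f (Icc a a') + ENNReal.ofReal M) + δ := add_le_add_left hS _
        _ ≤ (δ + ENNReal.ofReal M) + δ := add_le_add_left (add_le_add_left hsmall.le _) _
        _ = ENNReal.ofReal M + 2 * δ := by ring
    exact absurd (lt_of_le_of_lt hfinal hcon) (lt_irrefl _)
  refine ⟨a, ha, ?_⟩
  calc eVariationOn f (Icc a x) < I + δ := hvar
    _ ≤ (ENNReal.ofReal M + 2 * δ) + δ := add_le_add_left hclaim _
    _ = ENNReal.ofReal M + 3 * δ := by ring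
    _ < ENNReal.ofReal M + 4 * δ := by
        refine ENNReal.add_lt_add_left ENNReal.ofReal_ne_top ?_
        refine ENNReal.mul_lt_mul_left (ne_of_gt hδ0) hδtop ?_
        norm_num
    _ = ENNReal.ofReal (M + ε) := by
        rw [h4δ, ENNReal.ofReal_add hM0 hε.le]

/-- Right version, by reflection. -/
lemma right_small (f : ℝ → ℝ) {M ε : ℝ} (hM : ∀ z ∈ Icc (0:ℝ) 1, f z ∈ Icc 0 M)
    (hε : 0 < ε) (hfin : eVariationOn f (Icc (0:ℝ) 1) ≠ ⊤) {x : ℝ} (hx : x ∈ Ico (0:ℝ) 1) :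
    ∃ b, b ∈ Ioc x 1 ∧ eVariationOn f (Icc x b) < ENNReal.ofReal (M + ε) := by
  set f' : ℝ → ℝ := fun z => f (1 - z) with hf'
  have hrefl : ∀ (c d : ℝ), eVariationOn f' (Icc c d) = eVariationOn f (Icc (1-d) (1-c)) := by
    intro c d
    apply le_antisymm
    · refine eVariationOn.comp_le_of_antitoneOn f (fun z => 1 - z)
        (fun p hp q hq hpq => by dsimp only; linarith) ?_
      intro z hz
      constructor
      · dsimp only; linarith [hz.2]
      · dsimp only; linarith [hz.1]
    · have h2 : eVariationOn (f' ∘ (fun z => 1 - z)) (Icc (1-d) (1-c))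
          ≤ eVariationOn f' (Icc c d) := by
        refine eVariationOn.comp_le_of_antitoneOn f' (fun z => 1 - z)
          (fun p hp q hq hpq => by dsimp only; linarith) ?_
        intro z hz
        constructor
        · dsimp only; linarith [hz.2]
        · dsimp only; linarith [hz.1]
      refine le_trans (le_of_eq ?_) h2
      apply eVariationOn.eq_of_eqOn
      intro z _
      show f z = f' (1 - z)
      rw [hf']
      dsimp only
      congr 1
      ring
  have hM' : ∀ z ∈ Icc (0:ℝ) 1, f' z ∈ Icc 0 M := by
    intro z hz
    refine hM (1 - z) ?_
    constructor <;> [linarith [hz.2]; linarith [hz.1]]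
  have hfin' : eVariationOn f' (Icc (0:ℝ) 1) ≠ ⊤ := by
    rw [hrefl 0 1]
    simpa using hfin
  have hx' : (1 - x) ∈ Ioc (0:ℝ) 1 := ⟨by linarith [hx.2], by linarith [hx.1]⟩
  obtain ⟨a, ha, hvar⟩ := left_small f' hM' hε hfin' hx'
  refine ⟨1 - a, ⟨by linarith [ha.2], by linarith [ha.1]⟩, ?_⟩
  have heq : eVariationOn f' (Icc a (1-x)) = eVariationOn f (Icc x (1-a)) := by
    rw [hrefl]
    have hxx : 1 - (1 - x) = x := by ring
    rw [hxx]
  rw [← heq]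
  exact hvar

end RyAux

namespace RyAux

lemma creep (f : ℝ → ℝ) {M ε : ℝ} (hM : ∀ z ∈ Icc (0:ℝ) 1, f z ∈ Icc 0 M) (hε : 0 < ε)
    (hfin : eVariationOn f (Icc (0:ℝ) 1) ≠ ⊤) :
    ∃ (n : ℕ) (t : ℕ → ℝ), t 0 = 0 ∧ t n = 1 ∧ (∀ i < n, t i < t (i+1)) ∧
      ∀ i < n, eVariationOn f (Icc (t i) (t (i+1))) < ENNReal.ofReal (M + ε) := by
  classical
  set E := ENNReal.ofReal (M + ε) with hE
  set A : Set ℝ := {x | x ∈ Icc (0:ℝ) 1 ∧ ∃ (n : ℕ) (t : ℕ → ℝ), t 0 = 0 ∧ t n = x ∧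
    (∀ i < n, t i < t (i+1)) ∧ ∀ i < n, eVariationOn f (Icc (t i) (t (i+1))) < E} with hA
  have h0A : (0:ℝ) ∈ A :=
    ⟨⟨le_rfl, zero_le_one⟩, 0, fun _ => 0, rfl, rfl,
      fun i hi => absurd hi (Nat.not_lt_zero i), fun i hi => absurd hi (Nat.not_lt_zero i)⟩
  have hne : A.Nonempty := ⟨0, h0A⟩
  have hbdd : BddAbove A := ⟨1, fun x hx => hx.1.2⟩
  set s := sSup A with hs
  have hs1 : s ≤ 1 := csSup_le hne (fun x hx => hx.1.2)
  have hs0 : 0 ≤ s := le_csSup hbdd h0A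
  -- the sup belongs to A
  have hsA : s ∈ A := by
    rcases eq_or_lt_of_le hs0 with h0 | h0
    · rw [← h0]; exact h0A
    · obtain ⟨a, ha, hvar⟩ := left_small f hM hε hfin ⟨h0, hs1⟩
      have hex : ∃ x ∈ A, a < x := by
        by_contra hc
        push_neg at hc
        have hle : s ≤ a := csSup_le hne hc
        exact absurd ha.2 (not_lt.2 hle)
      obtain ⟨x, hxA, hax⟩ := hex
      rcases eq_or_lt_of_le (le_csSup hbdd hxA) with hxs | hxs
      · rw [hs, ← hxs]; exact hxA
      · obtain ⟨⟨hx0, hx1⟩, n, t, ht0, htn, hinc, hvarp⟩ := hxA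
        refine ⟨⟨hs0, hs1⟩, n+1, (fun i => if i ≤ n then t i else s), ?_, ?_, ?_, ?_⟩
        · dsimp only; rw [if_pos (Nat.zero_le n)]; exact ht0
        · dsimp only; rw [if_neg (by omega)]
        · intro i hi
          dsimp only
          rcases Nat.lt_succ_iff_lt_or_eq.1 hi with h | h
          · rw [if_pos (by omega), if_pos (by omega)]
            exact hinc i h
          · subst h
            rw [if_pos (le_refl _), if_neg (by omega), htn]
            exact hxs
        · intro i hi
          dsimp only
          rcases Nat.lt_succ_iff_lt_or_eq.1 hi with h | h
          · rw [if_pos (by omega), if_pos (by omega)]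
            exact hvarp i h
          · subst h
            rw [if_pos (le_refl _), if_neg (by omega), htn]
            exact lt_of_le_of_lt
              (eVariationOn.mono f (Icc_subset_Icc hax.le le_rfl)) hvar
  -- the sup is 1
  have hseq : s = 1 := by
    by_contra hs1'
    have hslt : s < 1 := lt_of_le_of_ne hs1 hs1'
    obtain ⟨b, hb, hvarb⟩ := right_small f hM hε hfin ⟨hs0, hslt⟩
    obtain ⟨⟨_, _⟩, n, t, ht0, htn, hinc, hvarp⟩ := hsA
    have hbA : b ∈ A := by
      refine ⟨⟨hs0.trans hb.1.le, hb.2⟩, n+1, (fun i => if i ≤ n then t i else b), ?_, ?_, ?_, ?_⟩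
      · dsimp only; rw [if_pos (Nat.zero_le n)]; exact ht0
      · dsimp only; rw [if_neg (by omega)]
      · intro i hi
        dsimp only
        rcases Nat.lt_succ_iff_lt_or_eq.1 hi with h | h
        · rw [if_pos (by omega), if_pos (by omega)]
          exact hinc i h
        · subst h
          rw [if_pos (le_refl _), if_neg (by omega), htn]
          exact hb.1
      · intro i hi
        dsimp only
        rcases Nat.lt_succ_iff_lt_or_eq.1 hi with h | h
        · rw [if_pos (by omega), if_pos (by omega)]
          exact hvarp i h
        · subst h
          rw [if_pos (le_refl _), if_neg (by omega), htn]
          exact hvarb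
    have := le_csSup hbdd hbA
    exact absurd hb.1 (not_lt.2 this)
  obtain ⟨_, n, t, ht0, htn, hinc, hvarp⟩ := hsA
  exact ⟨n, t, ht0, by rw [htn, hseq], hinc, hvarp⟩

end RyAux

/-- For every `ε > 0` and `N ≥ 1` there is a finite partition
`0 = t 0 < t 1 < ⋯ < t n = 1` of `X` into intervals such that
`var_A(g_N) < ‖g_N‖_∞ + ε` on each piece `A = [t i, t (i+1)]`. -/
theorem stmt2 (R : RychlikSystem) (ε : ℝ) (hε : 0 < ε) (N : ℕ) (hN : 1 ≤ N) :
    ∃ (n : ℕ) (t : ℕ → ℝ), t 0 = 0 ∧ t n = 1 ∧ (∀ i < n, t i < t (i + 1)) ∧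
      ∀ i < n, eVariationOn (gIter R.T R.g N) (Icc (t i) (t (i + 1))) <
        ENNReal.ofReal (supNorm01 (gIter R.T R.g N) + ε) := by
  classical
  obtain ⟨K, hK⟩ := R.g_bdd
  have hbdd : BddAbove ((gIter R.T R.g N) '' Icc 0 1) := by
    refine ⟨K^N, ?_⟩
    rintro y ⟨z, _, rfl⟩
    exact RyAux.gIter_le_pow R.g_nonneg hK N z
  have hM : ∀ z ∈ Icc (0:ℝ) 1, (gIter R.T R.g N) z ∈ Icc 0 (supNorm01 (gIter R.T R.g N)) := by
    intro z hz
    exact ⟨RyAux.gIter_nonneg R.g_nonneg N z,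
      le_csSup hbdd (mem_image_of_mem _ hz)⟩
  obtain ⟨n, t, ht0, htn, hinc, hvar⟩ := RyAux.creep (gIter R.T R.g N) hM hε (gIter_bv R N)
  exact ⟨n, t, ht0, htn, hinc, hvar⟩
end

section
/- There exists a constant C₀ > 0, depending only on τ̇, such that for every δ ∈ (0,1): sup_{x ∈ [0,1]} |τ_δ⁻¹(x) − τ⁻¹(x)| ≤ C₀·δ. (Both τ and τ_δ are strictly increasing bijections of ℝ, so their inverses are well defined.) -/
open MeasureTheory Set intervalIntegral

/-- The centered Gaussian density `φ_δ` with standard deviation `δ`. -/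
noncomputable def gaussKer (δ : ℝ) : ℝ → ℝ := fun x =>
  (δ * Real.sqrt (2 * Real.pi))⁻¹ * Real.exp (-(x ^ 2) / (2 * δ ^ 2))

/-- Convolution `f * φ_δ` over `ℝ`. -/
noncomputable def convGauss (f : ℝ → ℝ) (δ : ℝ) : ℝ → ℝ := fun x =>
  ∫ y : ℝ, f y * gaussKer δ (x - y)

/-- `τ(x) = ∫₀ˣ τ̇(u) du`. -/
noncomputable def tauOf (τdot : ℝ → ℝ) : ℝ → ℝ := fun x => ∫ u in (0:ℝ)..x, τdot u

/-- `τ_δ = τ * φ_δ − (τ * φ_δ)(0)`. -/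
noncomputable def tauDelta (τdot : ℝ → ℝ) (δ : ℝ) : ℝ → ℝ := fun x =>
  convGauss (tauOf τdot) δ x - convGauss (tauOf τdot) δ 0

open Topology Real Filter


-- surjectivity from linear lower bound
lemma surj_of_lb {f : ℝ → ℝ} {c : ℝ} (hc : 0 < c) (hf : Continuous f)
    (hfl : ∀ x y : ℝ, x ≤ y → c * (y - x) ≤ f y - f x) : Function.Surjective f := by
  apply hf.surjective
  · apply tendsto_atTop_mono' _ _ (tendsto_atTop_add_const_left atTop (f 0)
      (tendsto_id.const_mul_atTop hc))
    filter_upwards [eventually_ge_atTop (0:ℝ)] with x hx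
    have := hfl 0 x hx
    simp only [id_eq]
    linarith
  · apply tendsto_atBot_mono' _ _ (tendsto_atBot_add_const_left atBot (f 0)
      (tendsto_id.const_mul_atBot hc))
    filter_upwards [eventually_le_atBot (0:ℝ)] with x hx
    have := hfl x 0 hx
    simp only [id_eq]
    linarith

lemma inv_comp {f g : ℝ → ℝ} {c ε : ℝ} (hc : 0 < c)
    (hf : Continuous f) (hg : Continuous g)
    (hfl : ∀ x y : ℝ, x ≤ y → c * (y - x) ≤ f y - f x)
    (hgl : ∀ x y : ℝ, x ≤ y → c * (y - x) ≤ g y - g x)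
    (hfg : ∀ x, |f x - g x| ≤ ε) (x : ℝ) :
    |Function.invFun g x - Function.invFun f x| ≤ ε / c := by
  have hfs := surj_of_lb hc hf hfl
  have hgs := surj_of_lb hc hg hgl
  set a := Function.invFun g x
  set b := Function.invFun f x
  have hga : g a = x := Function.invFun_eq (hgs x)
  have hfb : f b = x := Function.invFun_eq (hfs x)
  have key : c * |a - b| ≤ |f a - f b| := by
    rcases le_total a b with h | h
    · have h2 := hfl a b h
      have h3 : (0:ℝ) ≤ c * (b - a) := mul_nonneg hc.le (by linarith)
      rw [abs_sub_comm a b, abs_of_nonneg (by linarith), abs_sub_comm,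
        abs_of_nonneg (by linarith)]
      exact h2
    · have h2 := hfl b a h
      have h3 : (0:ℝ) ≤ c * (a - b) := mul_nonneg hc.le (by linarith)
      rw [abs_of_nonneg (by linarith), abs_of_nonneg (by linarith)]
      exact h2
  have : |f a - f b| ≤ ε := by
    rw [hfb, ← hga]
    exact hfg a
  rw [le_div_iff₀ hc, mul_comm]
  linarith

lemma gaussKer_nonneg {δ : ℝ} (hδ : 0 < δ) (x : ℝ) : 0 ≤ gaussKer δ x := by
  unfold gaussKer
  positivity

lemma gaussKer_cont (δ : ℝ) : Continuous (gaussKer δ) := by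
  unfold gaussKer
  fun_prop

lemma gaussKer_eq {δ : ℝ} (x : ℝ) :
    gaussKer δ x = (δ * Real.sqrt (2*π))⁻¹ * Real.exp (-(2*δ^2)⁻¹ * x^2) := by
  unfold gaussKer
  rw [neg_div, div_eq_inv_mul, neg_mul]

lemma gaussKer_integrable {δ : ℝ} (hδ : 0 < δ) : Integrable (gaussKer δ) := by
  have hb : 0 < (2*δ^2)⁻¹ := by positivity
  have := (integrable_exp_neg_mul_sq hb).const_mul (δ * Real.sqrt (2*π))⁻¹
  exact this.congr (Eventually.of_forall fun x => (gaussKer_eq x).symm)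

lemma gaussKer_integral {δ : ℝ} (hδ : 0 < δ) : ∫ x, gaussKer δ x = 1 := by
  have hb : 0 < (2*δ^2)⁻¹ := by positivity
  have h1 : ∫ x, gaussKer δ x = (δ * Real.sqrt (2*π))⁻¹ * ∫ x, Real.exp (-(2*δ^2)⁻¹ * x^2) := by
    rw [← MeasureTheory.integral_const_mul]
    exact MeasureTheory.integral_congr_ae (Eventually.of_forall fun x => gaussKer_eq x)
  rw [h1, integral_gaussian]
  have h2 : π / (2*δ^2)⁻¹ = (2*π) * δ^2 := by
    field_simp
  have h4 : Real.sqrt (2 * π * δ ^ 2) = Real.sqrt (2*π) * δ := by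
    rw [Real.sqrt_mul (by positivity), Real.sqrt_sq hδ.le]
  rw [h2, h4]
  have h3 : 0 < δ * Real.sqrt (2*π) := by
    have := Real.sqrt_pos.mpr (by positivity : (0:ℝ) < 2*π)
    positivity
  field_simp

lemma moment_Ioi {b : ℝ} (hb : 0 < b) :
    ∫ x in Ioi (0:ℝ), x * Real.exp (-b * x ^ 2) = (2*b)⁻¹ := by
  have hderiv : ∀ x ∈ Ici (0:ℝ), HasDerivAt (fun x => -(2*b)⁻¹ * Real.exp (-b * x ^ 2))
      (x * Real.exp (-b * x ^ 2)) x := by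
    intro x _
    have h1 : HasDerivAt (fun x : ℝ => -b * x ^ 2) (-b * (2 * x)) x := by
      simpa using (hasDerivAt_pow 2 x).const_mul (-b)
    have h2 := h1.exp.const_mul (-(2*b)⁻¹)
    refine h2.congr_deriv ?_
    have hbb : (2*b)⁻¹ * (2*b) = 1 := inv_mul_cancel₀ (by positivity)
    linear_combination (x * Real.exp (-b * x ^ 2)) * hbb
  have hf : Tendsto (fun x : ℝ => -(2*b)⁻¹ * Real.exp (-b * x ^ 2)) atTop (𝓝 0) := by
    have h3 : Tendsto (fun x : ℝ => -b * x ^ 2) atTop atBot :=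
      (tendsto_pow_atTop (two_ne_zero)).const_mul_atTop_of_neg (by linarith)
    have h4 := (Real.tendsto_exp_atBot.comp h3).const_mul (-(2*b)⁻¹)
    simpa using h4
  have := integral_Ioi_of_hasDerivAt_of_tendsto' hderiv
      ((integrable_mul_exp_neg_mul_sq hb).integrableOn) hf
  rw [this]
  simp

lemma gaussKer_abs_integrable {δ : ℝ} (hδ : 0 < δ) :
    Integrable (fun x => |x| * gaussKer δ x) := by
  have hb : 0 < (2*δ^2)⁻¹ := by positivity
  have h0 := ((integrable_mul_exp_neg_mul_sq hb).abs).const_mul (δ * Real.sqrt (2*π))⁻¹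
  apply h0.congr (Eventually.of_forall fun x => ?_)
  simp only [gaussKer_eq, abs_mul, Real.abs_exp]
  ring

lemma gaussKer_abs_integral {δ : ℝ} (hδ : 0 < δ) :
    ∫ x, |x| * gaussKer δ x ≤ δ := by
  have hb : 0 < (2*δ^2)⁻¹ := by positivity
  have h1 : ∫ x, |x| * gaussKer δ x
      = (δ * Real.sqrt (2*π))⁻¹ * ∫ x, |x| * Real.exp (-(2*δ^2)⁻¹ * x^2) := by
    rw [← MeasureTheory.integral_const_mul]
    apply MeasureTheory.integral_congr_ae (Eventually.of_forall fun x => ?_)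
    rw [gaussKer_eq]; ring
  have h2 : ∫ x, |x| * Real.exp (-(2*δ^2)⁻¹ * x^2)
      = 2 * ∫ x in Ioi (0:ℝ), x * Real.exp (-(2*δ^2)⁻¹ * x^2) := by
    rw [← integral_comp_abs (f := fun x => x * Real.exp (-(2*δ^2)⁻¹ * x^2))]
    apply MeasureTheory.integral_congr_ae (Eventually.of_forall fun x => ?_)
    rw [sq_abs]
  rw [h1, h2, moment_Ioi hb]
  have h3 : (2 * (2 * (2*δ^2)⁻¹)⁻¹ : ℝ) = 2 * δ^2 := by
    field_simp
  rw [h3]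
  have hs : (2:ℝ) ≤ Real.sqrt (2*π) := by
    have h4 : Real.sqrt 4 ≤ Real.sqrt (2*π) := Real.sqrt_le_sqrt (by nlinarith [Real.pi_gt_three])
    have h5 : Real.sqrt 4 = 2 := by
      rw [show (4:ℝ) = 2^2 by norm_num, Real.sqrt_sq]; norm_num
    linarith
  have hspos : 0 < δ * Real.sqrt (2*π) := by positivity
  rw [inv_mul_le_iff₀ hspos]
  nlinarith

section conv

variable {f : ℝ → ℝ} {M c δ : ℝ}

lemma conv_integrable (hδ : 0 < δ) (hf : Continuous f)
    (hlip : ∀ x y : ℝ, |f y - f x| ≤ M * |y - x|) (w : ℝ) :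
    Integrable (fun z => f (w - z) * gaussKer δ z) := by
  apply Integrable.mono' (g := fun z => |f w| * gaussKer δ z + M * (|z| * gaussKer δ z))
    (((gaussKer_integrable hδ).const_mul _).add ((gaussKer_abs_integrable hδ).const_mul M))
    (Continuous.aestronglyMeasurable (by
      exact (hf.comp (continuous_const.sub continuous_id)).mul (gaussKer_cont δ)))
  refine ae_of_all _ fun z => ?_
  rw [Real.norm_eq_abs, abs_mul, abs_of_nonneg (gaussKer_nonneg hδ z)]
  have h1 : |f (w - z) - f w| ≤ M * |z| := by
    have := hlip w (w - z)
    simpa using this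
  have h2 : |f (w - z)| - |f w| ≤ |f (w - z) - f w| := abs_sub_abs_le_abs_sub _ _
  nlinarith [gaussKer_nonneg hδ z]

lemma conv_flip (hδ : 0 < δ) (x : ℝ) :
    convGauss f δ x = ∫ z, f (x - z) * gaussKer δ z := by
  unfold convGauss
  rw [← MeasureTheory.integral_sub_left_eq_self (fun z => f (x - z) * gaussKer δ z) volume x]
  congr 1
  funext y
  simp [sub_sub_cancel]

lemma conv_sub_self (hδ : 0 < δ) (hM : 0 ≤ M) (hf : Continuous f)
    (hlip : ∀ x y : ℝ, |f y - f x| ≤ M * |y - x|) (x : ℝ) :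
    |convGauss f δ x - f x| ≤ M * δ := by
  have h0 : convGauss f δ x - f x = ∫ z, (f (x - z) - f x) * gaussKer δ z := by
    rw [conv_flip hδ]
    have h1 : ∫ z, (f (x - z) - f x) * gaussKer δ z
        = (∫ z, f (x - z) * gaussKer δ z) - ∫ z, f x * gaussKer δ z := by
      rw [← MeasureTheory.integral_sub (conv_integrable hδ hf hlip x)
        ((gaussKer_integrable hδ).const_mul (f x))]
      congr 1; funext z; ring
    rw [h1, MeasureTheory.integral_const_mul, gaussKer_integral hδ, mul_one]
  rw [h0]
  have hb : ‖∫ z, (f (x - z) - f x) * gaussKer δ z‖ ≤ ∫ z, M * (|z| * gaussKer δ z) := by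
    apply MeasureTheory.norm_integral_le_of_norm_le ((gaussKer_abs_integrable hδ).const_mul M)
    refine ae_of_all _ fun z => ?_
    rw [Real.norm_eq_abs, abs_mul, abs_of_nonneg (gaussKer_nonneg hδ z)]
    have h1 : |f (x - z) - f x| ≤ M * |z| := by simpa using hlip x (x - z)
    have := gaussKer_nonneg hδ z
    nlinarith
  rw [Real.norm_eq_abs] at hb
  calc |∫ z, (f (x - z) - f x) * gaussKer δ z| ≤ ∫ z, M * (|z| * gaussKer δ z) := hb
    _ = M * ∫ z, |z| * gaussKer δ z := MeasureTheory.integral_const_mul M _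
    _ ≤ M * δ := mul_le_mul_of_nonneg_left (gaussKer_abs_integral hδ) hM

lemma conv_diff (hδ : 0 < δ) (hf : Continuous f)
    (hlip : ∀ x y : ℝ, |f y - f x| ≤ M * |y - x|) (x y : ℝ) :
    convGauss f δ y - convGauss f δ x = ∫ z, (f (y - z) - f (x - z)) * gaussKer δ z := by
  rw [conv_flip hδ, conv_flip hδ,
    ← MeasureTheory.integral_sub (conv_integrable hδ hf hlip y) (conv_integrable hδ hf hlip x)]
  congr 1; funext z; ring

lemma conv_low (hδ : 0 < δ) (hf : Continuous f)
    (hlip : ∀ x y : ℝ, |f y - f x| ≤ M * |y - x|)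
    (hlow : ∀ x y : ℝ, x ≤ y → c * (y - x) ≤ f y - f x)
    {x y : ℝ} (hxy : x ≤ y) :
    c * (y - x) ≤ convGauss f δ y - convGauss f δ x := by
  rw [conv_diff hδ hf hlip]
  have h1 : c * (y - x) = ∫ z, (c * (y - x)) * gaussKer δ z := by
    rw [MeasureTheory.integral_const_mul, gaussKer_integral hδ, mul_one]
  rw [h1]
  apply MeasureTheory.integral_mono ((gaussKer_integrable hδ).const_mul _)
    (((conv_integrable hδ hf hlip y).sub (conv_integrable hδ hf hlip x)).congr
      (Eventually.of_forall fun z => by simp only [Pi.sub_apply]; ring))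
  intro z
  have h2 : c * (y - x) ≤ f (y - z) - f (x - z) := by
    have := hlow (x - z) (y - z) (by linarith)
    calc c * (y - x) = c * (y - z - (x - z)) := by ring
      _ ≤ _ := this
  exact mul_le_mul_of_nonneg_right h2 (gaussKer_nonneg hδ z)

lemma conv_lip (hδ : 0 < δ) (hM : 0 ≤ M) (hf : Continuous f)
    (hlip : ∀ x y : ℝ, |f y - f x| ≤ M * |y - x|) (x y : ℝ) :
    |convGauss f δ y - convGauss f δ x| ≤ M * |y - x| := by
  rw [conv_diff hδ hf hlip]
  have hb : ‖∫ z, (f (y - z) - f (x - z)) * gaussKer δ z‖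
      ≤ ∫ z, (M * |y - x|) * gaussKer δ z := by
    apply MeasureTheory.norm_integral_le_of_norm_le ((gaussKer_integrable hδ).const_mul _)
    refine ae_of_all _ fun z => ?_
    rw [Real.norm_eq_abs, abs_mul, abs_of_nonneg (gaussKer_nonneg hδ z)]
    have h1 : |f (y - z) - f (x - z)| ≤ M * |y - x| := by
      have := hlip (x - z) (y - z)
      simpa using this
    have := gaussKer_nonneg hδ z
    nlinarith
  rw [Real.norm_eq_abs] at hb
  calc |∫ z, (f (y - z) - f (x - z)) * gaussKer δ z|
      ≤ ∫ z, (M * |y - x|) * gaussKer δ z := hb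
    _ = M * |y - x| := by rw [MeasureTheory.integral_const_mul, gaussKer_integral hδ, mul_one]

end conv

section tau

variable {τdot : ℝ → ℝ} {M c : ℝ}

lemma tau_ii (hmeas : Measurable τdot) (hM : ∀ x, |τdot x| ≤ M) (a b : ℝ) :
    IntervalIntegrable τdot volume a b := by
  rw [intervalIntegrable_iff]
  refine Integrable.mono' (g := fun _ => M) ?_ (hmeas.aestronglyMeasurable.restrict)
    (ae_of_all _ fun x => by simpa [Real.norm_eq_abs] using hM x)
  exact integrableOn_const measure_Ioc_lt_top.ne

lemma tau_sub (hmeas : Measurable τdot) (hM : ∀ x, |τdot x| ≤ M) (a b : ℝ) :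
    tauOf τdot b - tauOf τdot a = ∫ u in a..b, τdot u :=
  integral_interval_sub_left (tau_ii hmeas hM 0 b) (tau_ii hmeas hM 0 a)

lemma tau_lip (hmeas : Measurable τdot) (hM : ∀ x, |τdot x| ≤ M) (x y : ℝ) :
    |tauOf τdot y - tauOf τdot x| ≤ M * |y - x| := by
  rw [tau_sub hmeas hM]
  have := intervalIntegral.norm_integral_le_of_norm_le_const (a := x) (b := y) (C := M)
    (f := τdot) (fun u _ => by simpa [Real.norm_eq_abs] using hM u)
  simpa [Real.norm_eq_abs] using this

lemma tau_low (hmeas : Measurable τdot) (hM : ∀ x, |τdot x| ≤ M)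
    (hc : ∀ᵐ u ∂(volume : Measure ℝ), c ≤ τdot u) {x y : ℝ} (hxy : x ≤ y) :
    c * (y - x) ≤ tauOf τdot y - tauOf τdot x := by
  rw [tau_sub hmeas hM]
  have h1 : ∫ _u in x..y, (c : ℝ) ≤ ∫ u in x..y, τdot u :=
    intervalIntegral.integral_mono_ae hxy intervalIntegrable_const (tau_ii hmeas hM x y) hc
  simpa [intervalIntegral.integral_const, smul_eq_mul, mul_comm] using h1

lemma lip_cont {f : ℝ → ℝ} (hM0 : 0 ≤ M)
    (hlip : ∀ x y : ℝ, |f y - f x| ≤ M * |y - x|) : Continuous f := by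
  have : LipschitzWith (Real.toNNReal M) f := by
    apply LipschitzWith.of_dist_le_mul
    intro a b
    rw [Real.dist_eq, Real.dist_eq, Real.coe_toNNReal M hM0]
    exact hlip b a
  exact this.continuous

end tau

/-- There is `C₀ > 0` depending only on `τ̇` such that for every `δ ∈ (0,1)`,
`sup_{x ∈ [0,1]} |τ_δ⁻¹(x) − τ⁻¹(x)| ≤ C₀ δ` (both `τ` and `τ_δ` are strictly
increasing bijections of `ℝ`, and the inverses are realized by `Function.invFun`). -/
theorem stmt8 (p : ℕ) (hp : 2 ≤ p) (τdot : ℝ → ℝ) (hmeas : Measurable τdot)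
    (hper : ∀ x, τdot (x + p) = τdot x)
    (hbv : BoundedVariationOn τdot (Icc 0 (p : ℝ)))
    (hinf : 0 < essInf τdot volume) (hsup : essSup τdot volume ≤ 1) :
    ∃ C₀ : ℝ, 0 < C₀ ∧ ∀ δ ∈ Ioo (0:ℝ) 1, ∀ x ∈ Icc (0:ℝ) 1,
      |Function.invFun (tauDelta τdot δ) x - Function.invFun (tauOf τdot) x| ≤
        C₀ * δ := by
  clear hsup
  have hp0 : (0:ℝ) < (p : ℝ) := by
    have : (2:ℝ) ≤ (p:ℝ) := by exact_mod_cast hp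
    linarith
  -- pointwise bound `M` on `τdot`
  set V := (eVariationOn τdot (Icc 0 (p:ℝ))).toReal with hV
  have hbd : ∀ x ∈ Icc (0:ℝ) (p:ℝ), |τdot x| ≤ |τdot 0| + V := by
    intro x hx
    have h0 : (0:ℝ) ∈ Icc (0:ℝ) (p:ℝ) := ⟨le_refl _, hp0.le⟩
    have h1 := eVariationOn.edist_le τdot hx h0
    have h2 : dist (τdot x) (τdot 0) ≤ V := by
      rw [dist_edist]
      exact ENNReal.toReal_mono hbv h1
    rw [Real.dist_eq] at h2
    have h3 : |τdot x| ≤ |τdot x - τdot 0| + |τdot 0| := by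
      have := abs_add_le (τdot x - τdot 0) (τdot 0)
      simpa using this
    linarith
  set M := max 1 (|τdot 0| + V) with hMdef
  have hM1 : (1:ℝ) ≤ M := le_max_left _ _
  have hM0 : (0:ℝ) < M := lt_of_lt_of_le one_pos hM1
  have hM : ∀ x, |τdot x| ≤ M := by
    intro x
    have hperiodic : Function.Periodic τdot (p:ℝ) := hper
    obtain ⟨y, hy, hxy⟩ := hperiodic.exists_mem_Ico₀ hp0 x
    rw [hxy]
    exact le_trans (hbd y (Ico_subset_Icc_self hy)) (le_max_right _ _)
  -- a.e. lower bound `c`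
  set c := essInf τdot volume / 2 with hcdef
  have hc0 : 0 < c := by positivity
  have hcae : ∀ᵐ u ∂(volume : Measure ℝ), c ≤ τdot u := by
    have hESS : essInf τdot volume
        = sSup {a : ℝ | ∀ᵐ u ∂(volume : Measure ℝ), a ≤ τdot u} :=
      Filter.liminf_eq
    have hSne : {a : ℝ | ∀ᵐ u ∂(volume : Measure ℝ), a ≤ τdot u}.Nonempty := by
      by_contra h
      rw [not_nonempty_iff_eq_empty] at h
      rw [h, Real.sSup_empty] at hESS
      rw [hESS] at hinf
      exact lt_irrefl 0 hinf
    obtain ⟨a, haS, ha⟩ := exists_lt_of_lt_csSup hSne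
      (show c < sSup {a : ℝ | ∀ᵐ u ∂(volume : Measure ℝ), a ≤ τdot u} by
        rw [← hESS]; rw [hcdef]; linarith)
    have haS' : ∀ᵐ u ∂(volume : Measure ℝ), a ≤ τdot u := haS
    exact haS'.mono fun u hu => le_trans ha.le hu
  -- properties of `τ`
  have hτlip := tau_lip hmeas hM
  have hτlow : ∀ x y : ℝ, x ≤ y → c * (y - x) ≤ tauOf τdot y - tauOf τdot x :=
    fun x y hxy => tau_low hmeas hM hcae hxy
  have hτcont : Continuous (tauOf τdot) := lip_cont hM0.le hτlip
  refine ⟨2 * M / c, by positivity, ?_⟩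
  intro δ hδ x _hx
  have hδ0 : 0 < δ := hδ.1
  have hg_low : ∀ u v : ℝ, u ≤ v →
      c * (v - u) ≤ tauDelta τdot δ v - tauDelta τdot δ u := by
    intro u v huv
    have := conv_low hδ0 hτcont hτlip hτlow huv
    unfold tauDelta
    linarith
  have hg_lip : ∀ u v : ℝ, |tauDelta τdot δ v - tauDelta τdot δ u| ≤ M * |v - u| := by
    intro u v
    have := conv_lip hδ0 hM0.le hτcont hτlip u v
    unfold tauDelta
    have heq : convGauss (tauOf τdot) δ v - convGauss (tauOf τdot) δ 0 -
        (convGauss (tauOf τdot) δ u - convGauss (tauOf τdot) δ 0)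
        = convGauss (tauOf τdot) δ v - convGauss (tauOf τdot) δ u := by ring
    rw [heq]
    exact this
  have hg_cont : Continuous (tauDelta τdot δ) := lip_cont hM0.le hg_lip
  have hfg : ∀ u : ℝ, |tauOf τdot u - tauDelta τdot δ u| ≤ 2 * M * δ := by
    intro u
    have h1 := conv_sub_self hδ0 hM0.le hτcont hτlip u
    have h2 := conv_sub_self hδ0 hM0.le hτcont hτlip 0
    have hτ0 : tauOf τdot 0 = 0 := intervalIntegral.integral_same
    rw [hτ0, sub_zero] at h2
    unfold tauDelta
    have h1' := abs_le.1 h1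
    have h2' := abs_le.1 h2
    rw [abs_le]
    constructor <;> [skip; skip] <;> nlinarith [h1'.1, h1'.2, h2'.1, h2'.2]
  have hfinal := inv_comp hc0 hτcont hg_cont (fun a b => hτlow a b)
    (fun a b => hg_low a b) hfg x
  calc |Function.invFun (tauDelta τdot δ) x - Function.invFun (tauOf τdot) x|
      ≤ (2 * M * δ) / c := hfinal
    _ = 2 * M / c * δ := by ring
end

section
/- Let ρ > 0 and let f : {z ∈ ℂ : |Im z| ≤ ρ} → ℂ be continuous, holomorphic on {z : |Im z| < ρ}, and 1-periodic (f(z+1) = f(z) for all z). Then sup_{x ∈ [0,1]} |f(x)| + ∫₀¹ |f'(x)| dx ≤ (1 + 1/ρ)·sup_{|Im z| ≤ ρ} |f(z)|. -/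
open Set

/-- Cauchy-type estimate: if `f` is continuous on the closed strip
`{|Im z| ≤ ρ}`, holomorphic on the open strip and `1`-periodic there, then
`sup_{x ∈ [0,1]} |f(x)| + ∫₀¹ |f'(x)| dx ≤ (1 + 1/ρ)·sup_{|Im z| ≤ ρ} |f(z)|`. -/
theorem stmt17 (ρ : ℝ) (hρ : 0 < ρ) (f : ℂ → ℂ)
    (hcont : ContinuousOn f {z : ℂ | |z.im| ≤ ρ})
    (hdiff : DifferentiableOn ℂ f {z : ℂ | |z.im| < ρ})
    (hper : ∀ z : ℂ, |z.im| ≤ ρ → f (z + 1) = f z) :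
    sSup ((fun x : ℝ => ‖f x‖) '' Icc 0 1) +
        (∫ x in (0:ℝ)..1, ‖deriv f x‖) ≤
      (1 + 1 / ρ) * sSup ((fun z => ‖f z‖) '' {z : ℂ | |z.im| ≤ ρ}) := by
  set S := {z : ℂ | |z.im| ≤ ρ} with hS
  -- periodicity by integers
  have him : ∀ (z : ℂ) (r : ℝ), (z + (r:ℂ)).im = z.im := by intro z r; simp
  have hperZ : ∀ n : ℤ, ∀ z : ℂ, |z.im| ≤ ρ → f (z + (n:ℂ)) = f z := by
    intro n
    induction n using Int.induction_on with
    | zero => intro z hz; simp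
    | succ k ih =>
        intro z hz
        have h1 : ((k:ℤ)+1 : ℤ) = (k : ℤ) + 1 := rfl
        have : (((k:ℤ)+1 : ℤ) : ℂ) = (k : ℂ) + 1 := by push_cast; ring
        rw [this, ← add_assoc]
        rw [hper (z + (k:ℂ)) (by rw [show ((k:ℂ)) = ((k:ℝ):ℂ) by push_cast; rfl, him]; exact hz)]
        exact ih z hz
    | pred k ih =>
        intro z hz
        have key := hper (z + ((-(k:ℤ)-1 : ℤ) : ℂ))
          (by rw [show ((-(k:ℤ)-1 : ℤ) : ℂ) = (((-(k:ℝ)-1 : ℝ)):ℂ) by push_cast; ring, him]; exact hz)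
        have h2 : z + ((-(k:ℤ)-1 : ℤ) : ℂ) + 1 = z + ((-(k:ℤ) : ℤ) : ℂ) := by push_cast; ring
        rw [h2] at key
        rw [← key]; exact ih z hz
  -- a compact fundamental domain
  set K : Set ℂ := {z : ℂ | z.re ∈ Icc (0:ℝ) 1 ∧ |z.im| ≤ ρ} with hK
  have hKS : K ⊆ S := fun z hz => hz.2
  have hKc : IsCompact K := by
    apply Metric.isCompact_of_isClosed_isBounded
    · have : K = (Complex.re ⁻¹' Icc (0:ℝ) 1) ∩ ((fun z : ℂ => |z.im|) ⁻¹' Iic ρ) := rfl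
      rw [this]
      exact (isClosed_Icc.preimage Complex.continuous_re).inter
        (isClosed_Iic.preimage (Complex.continuous_im.abs))
    · apply Metric.isBounded_closedBall (x := (0:ℂ)) (r := 1 + ρ) |>.subset
      intro z hz
      simp only [Metric.mem_closedBall, dist_zero_right]
      calc ‖z‖ ≤ |z.re| + |z.im| := Complex.norm_le_abs_re_add_abs_im z
        _ ≤ 1 + ρ := add_le_add (abs_le.2 ⟨by linarith [hz.1.1], hz.1.2⟩) hz.2
  obtain ⟨C, hC⟩ := hKc.exists_bound_of_continuousOn (hcont.mono hKS)
  have hbound : ∀ z ∈ S, ‖f z‖ ≤ C := by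
    intro z hz
    set n : ℤ := ⌊z.re⌋ with hn
    set w : ℂ := z - (n:ℂ) with hw
    have hwim : w.im = z.im := by simp [hw]
    have hwS : |w.im| ≤ ρ := by rw [hwim]; exact hz
    have hwK : w ∈ K := by
      refine ⟨⟨?_, ?_⟩, hwS⟩
      · have : w.re = z.re - n := by simp [hw]
        rw [this]; linarith [Int.floor_le z.re]
      · have : w.re = z.re - n := by simp [hw]
        rw [this]; linarith [Int.lt_floor_add_one z.re]
    have : f z = f w := by
      have := hperZ n w hwS
      rw [show w + (n:ℂ) = z by rw [hw]; ring] at this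
      exact this
    rw [this]
    exact hC w hwK
  have hne : ((fun z => ‖f z‖) '' S).Nonempty :=
    ⟨_, ⟨0, by simp [hS, hρ.le], rfl⟩⟩
  have hbdd : BddAbove ((fun z => ‖f z‖) '' S) := by
    refine ⟨C, ?_⟩
    rintro _ ⟨z, hz, rfl⟩
    exact hbound z hz
  set M := sSup ((fun z => ‖f z‖) '' S) with hM
  have hle : ∀ z ∈ S, ‖f z‖ ≤ M := fun z hz => le_csSup hbdd ⟨z, hz, rfl⟩
  have h0S : (0:ℂ) ∈ S := by simp [hS, hρ.le]
  have hM0 : 0 ≤ M := le_trans (norm_nonneg (f 0)) (hle 0 h0S)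
  -- first part
  have h1 : sSup ((fun x : ℝ => ‖f x‖) '' Icc 0 1) ≤ M := by
    apply csSup_le
    · exact ⟨_, ⟨(0:ℝ), by simp, rfl⟩⟩
    · rintro _ ⟨x, _, rfl⟩
      exact hle _ (by simp [hS, hρ.le])
  -- Cauchy estimate for the derivative
  have hder : ∀ x : ℝ, ‖deriv f x‖ ≤ M / ρ := by
    intro x
    apply Complex.norm_deriv_le_of_forall_mem_sphere_norm_le hρ
    · constructor
      · apply hdiff.mono
        intro z hz
        rw [Metric.mem_ball] at hz
        have : |z.im| ≤ dist z (x:ℂ) := by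
          have : (z - (x:ℂ)).im = z.im := by simp
          calc |z.im| = |(z - (x:ℂ)).im| := by rw [this]
            _ ≤ ‖z - (x:ℂ)‖ := Complex.abs_im_le_norm _
            _ = dist z (x:ℂ) := (Complex.dist_eq z (x:ℂ)).symm
        exact lt_of_le_of_lt this hz
      · rw [closure_ball _ hρ.ne']
        apply hcont.mono
        intro z hz
        rw [Metric.mem_closedBall] at hz
        have h4 : |z.im| ≤ dist z (x:ℂ) := by
          have h5 : (z - (x:ℂ)).im = z.im := by simp
          calc |z.im| = |(z - (x:ℂ)).im| := by rw [h5]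
            _ ≤ ‖z - (x:ℂ)‖ := Complex.abs_im_le_norm _
            _ = dist z (x:ℂ) := (Complex.dist_eq z (x:ℂ)).symm
        exact le_trans h4 hz
    · intro z hz
      rw [mem_sphere_iff_norm] at hz
      apply hle
      have h5 : (z - (x:ℂ)).im = z.im := by simp
      show |z.im| ≤ ρ
      calc |z.im| = |(z - (x:ℂ)).im| := by rw [h5]
        _ ≤ ‖z - (x:ℂ)‖ := Complex.abs_im_le_norm _
        _ = ρ := hz
  -- integral bound
  have h2 : (∫ x in (0:ℝ)..1, ‖deriv f x‖) ≤ M / ρ := by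
    have := intervalIntegral.norm_integral_le_of_norm_le_const
      (C := M / ρ) (f := fun x : ℝ => (‖deriv f x‖ : ℝ)) (a := (0:ℝ)) (b := 1)
      (fun x _ => by
        rw [Real.norm_eq_abs, abs_of_nonneg (norm_nonneg _)]
        exact hder x)
    calc (∫ x in (0:ℝ)..1, ‖deriv f x‖)
        ≤ ‖∫ x in (0:ℝ)..1, ‖deriv f x‖‖ := le_abs_self _
      _ ≤ M / ρ * |1 - 0| := this
      _ = M / ρ := by norm_num
  calc sSup ((fun x : ℝ => ‖f x‖) '' Icc 0 1) +
        (∫ x in (0:ℝ)..1, ‖deriv f x‖) ≤ M + M / ρ := add_le_add h1 h2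
    _ = (1 + 1 / ρ) * M := by ring
end

section
/- The map P^E defined by P^E f(z) := τ'(z)·f(τ(z)) + τ'(z+1)·f(τ(z+1)) sends E_ρ into itself and is a compact bounded linear operator on E_ρ. -/
open Set Filter

/-- The closed strip `{z : |Im z| ≤ ρ}`. -/
def closedStrip (ρ : ℝ) : Set ℂ := {z : ℂ | |z.im| ≤ ρ}

/-- The open strip `{z : |Im z| < ρ}`. -/
def openStrip (ρ : ℝ) : Set ℂ := {z : ℂ | |z.im| < ρ}

/-- Membership in the Banach space `E_ρ`: continuous on the closed strip,
holomorphic on the open strip, and `1`-periodic. -/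
def MemE (ρ : ℝ) (f : ℂ → ℂ) : Prop :=
  ContinuousOn f (closedStrip ρ) ∧ DifferentiableOn ℂ f (openStrip ρ) ∧
    ∀ z ∈ closedStrip ρ, f (z + 1) = f z

/-- The norm of `E_ρ`: the supremum of `|f|` over the closed strip. -/
noncomputable def supStrip (ρ : ℝ) (f : ℂ → ℂ) : ℝ :=
  sSup ((fun z => ‖f z‖) '' closedStrip ρ)

/-- The operator `P^E f(z) = τ'(z)·f(τ(z)) + τ'(z+1)·f(τ(z+1))`. -/
noncomputable def PE (τ f : ℂ → ℂ) : ℂ → ℂ := fun z =>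
  deriv τ z * f (τ z) + deriv τ (z + 1) * f (τ (z + 1))

section Helpers

open Metric

set_option synthInstance.maxHeartbeats 1000000
set_option maxHeartbeats 1000000

lemma isOpen_openStrip (ρ : ℝ) : IsOpen (openStrip ρ) :=
  isOpen_lt (continuous_abs.comp Complex.continuous_im) continuous_const

lemma convex_openStrip (ρ : ℝ) : Convex ℝ (openStrip ρ) := by
  have : openStrip ρ = (fun z : ℂ => z.im) ⁻¹' (Ioo (-ρ) ρ) := by
    ext z; simp [openStrip, abs_lt, Set.mem_setOf_eq]
  rw [this]
  exact (convex_Ioo _ _).linear_preimage Complex.imLm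

lemma closedStrip_subset_openStrip {a b : ℝ} (h : a < b) : closedStrip a ⊆ openStrip b :=
  fun _ hz => lt_of_le_of_lt hz h

lemma closedStrip_mono {a b : ℝ} (h : a ≤ b) : closedStrip a ⊆ closedStrip b :=
  fun _ hz => le_trans hz h

lemma openStrip_subset_closedStrip (a : ℝ) : openStrip a ⊆ closedStrip a :=
  fun z hz => show |z.im| ≤ a from le_of_lt hz

lemma cauchyBound {g : ℂ → ℂ} {c : ℂ} {r M : ℝ} (hr : 0 < r)
    (hd : DifferentiableOn ℂ g (ball c r))
    (hc : ContinuousOn g (closedBall c r))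
    (hM : ∀ z ∈ closedBall c r, ‖g z‖ ≤ M) :
    ‖deriv g c‖ ≤ M / r := by
  refine Complex.norm_deriv_le_of_forall_mem_sphere_norm_le hr ⟨hd, ?_⟩ (fun z hz => ?_)
  · rwa [closure_ball c hr.ne']
  · exact hM z (sphere_subset_closedBall hz)

lemma lipBound {s : Set ℂ} (hs : Convex ℝ s) (ho : IsOpen s) {g : ℂ → ℂ}
    (hg : DifferentiableOn ℂ g s) {C : ℝ} (hC : ∀ z ∈ s, ‖deriv g z‖ ≤ C)
    {x y : ℂ} (hx : x ∈ s) (hy : y ∈ s) :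
    ‖g y - g x‖ ≤ C * ‖y - x‖ := by
  refine hs.norm_image_sub_le_of_norm_fderiv_le
    (fun z hz => hg.differentiableAt (ho.mem_nhds hz)) (fun z hz => ?_) hx hy
  rw [← toSpanSingleton_deriv, ContinuousLinearMap.norm_toSpanSingleton]
  exact hC z hz

lemma closedBall_subset_closedStrip {c : ℂ} {r a : ℝ} (hc : |c.im| ≤ a) :
    closedBall c r ⊆ closedStrip (a + r) := by
  intro z hz
  have h1 : |z.im - c.im| ≤ ‖z - c‖ := by
    rw [← Complex.sub_im]; exact Complex.abs_im_le_norm _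
  have h2 : ‖z - c‖ ≤ r := by
    rw [← Complex.dist_eq]; exact hz
  have := abs_sub_abs_le_abs_sub z.im c.im
  simp only [closedStrip, Set.mem_setOf_eq]
  linarith

lemma ball_subset_openStrip {c : ℂ} {r a : ℝ} (hc : |c.im| < a) :
    ball c r ⊆ openStrip (a + r) := by
  intro z hz
  have h1 : |z.im - c.im| ≤ ‖z - c‖ := by
    rw [← Complex.sub_im]; exact Complex.abs_im_le_norm _
  have h2 : ‖z - c‖ < r := by
    rw [← Complex.dist_eq]; exact hz
  have := abs_sub_abs_le_abs_sub z.im c.im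
  simp only [openStrip, Set.mem_setOf_eq]
  linarith

lemma tau_strip {ρ ρ' θ : ℝ} {τ : ℂ → ℂ} (hρ' : ρ < ρ') (hρ0 : 0 ≤ ρ)
    (hτdiff : DifferentiableOn ℂ τ (openStrip ρ'))
    (hτreal : ∀ x : ℝ, (τ x).im = 0)
    (hτderiv : ∀ z ∈ openStrip ρ', ‖deriv τ z‖ ≤ θ)
    {z : ℂ} (hz : z ∈ closedStrip ρ) : |(τ z).im| ≤ θ * |z.im| := by
  have hzs : z ∈ openStrip ρ' := closedStrip_subset_openStrip hρ' hz
  have hxs : (z.re : ℂ) ∈ openStrip ρ' := by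
    simp only [openStrip, Set.mem_setOf_eq, Complex.ofReal_im, abs_zero]
    linarith [(abs_nonneg z.im).trans hz]
  have key := lipBound (convex_openStrip ρ') (isOpen_openStrip ρ') hτdiff hτderiv hxs hzs
  have hsub : z - (z.re : ℂ) = (z.im : ℂ) * Complex.I := by
    have := (Complex.re_add_im z).symm
    linear_combination this
  have habs : ‖z - (z.re : ℂ)‖ = |z.im| := by
    rw [hsub, norm_mul, Complex.norm_I, Complex.norm_real, Real.norm_eq_abs, mul_one]
  rw [habs] at key
  calc |(τ z).im| = |(τ z - τ (z.re : ℂ)).im| := by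
        rw [Complex.sub_im, hτreal z.re, sub_zero]
    _ ≤ ‖τ z - τ (z.re : ℂ)‖ := Complex.abs_im_le_norm _
    _ ≤ θ * |z.im| := key

lemma tau_deriv_per {ρ' : ℝ} {τ : ℂ → ℂ} (hτper : ∀ z ∈ openStrip ρ', τ (z + 2) = τ z + 1)
    {z : ℂ} (hz : z ∈ openStrip ρ') : deriv τ (z + 2) = deriv τ z := by
  have h1 : deriv (fun w => τ (w + 2)) z = deriv τ (z + 2) := deriv_comp_add_const τ 2 z
  have h2 : (fun w => τ (w + 2)) =ᶠ[nhds z] fun w => τ w + 1 := by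
    filter_upwards [(isOpen_openStrip ρ').mem_nhds hz] with w hw
    exact hτper w hw
  rw [← h1, h2.deriv_eq, deriv_add_const]

def Kset (ρ : ℝ) : Set ℂ := {z : ℂ | z.re ∈ Icc (0:ℝ) 1 ∧ |z.im| ≤ ρ}

lemma Kset_subset (ρ : ℝ) : Kset ρ ⊆ closedStrip ρ := fun _ hz => hz.2

lemma isCompact_Kset (ρ : ℝ) : IsCompact (Kset ρ) := by
  have hcl : IsClosed (Kset ρ) := by
    have : Kset ρ = (Complex.re ⁻¹' Icc (0:ℝ) 1) ∩ {z : ℂ | |z.im| ≤ ρ} := rfl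
    rw [this]
    exact (isClosed_Icc.preimage Complex.continuous_re).inter
      (isClosed_le (continuous_abs.comp Complex.continuous_im) continuous_const)
  refine Metric.isCompact_of_isClosed_isBounded hcl ?_
  refine (Metric.isBounded_closedBall (x := (0:ℂ)) (r := 1 + |ρ|)).subset ?_
  intro z hz
  rw [Metric.mem_closedBall, dist_zero_right]
  calc ‖z‖ ≤ |z.re| + |z.im| := Complex.norm_le_abs_re_add_abs_im z
    _ ≤ 1 + |ρ| := by
        have h1 : |z.re| ≤ 1 := abs_le.2 ⟨by linarith [hz.1.1], hz.1.2⟩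
        have h2 : |z.im| ≤ |ρ| := hz.2.trans (le_abs_self ρ)
        linarith

lemma int_add_mem_closedStrip {ρ : ℝ} {z : ℂ} (hz : z ∈ closedStrip ρ) (m : ℤ) :
    z + (m : ℂ) ∈ closedStrip ρ := by
  simpa [closedStrip, Set.mem_setOf_eq, Complex.add_im, Complex.intCast_im] using hz

lemma per_int {ρ : ℝ} {f : ℂ → ℂ} (hper : ∀ z ∈ closedStrip ρ, f (z + 1) = f z) :
    ∀ (m : ℤ) (z : ℂ), z ∈ closedStrip ρ → f (z + (m : ℂ)) = f z := by
  intro m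
  induction m using Int.induction_on with
  | zero => intro z _; simp
  | succ k ih =>
    intro z hz
    have e : z + (((k : ℤ) + 1 : ℤ) : ℂ) = (z + ((k : ℤ) : ℂ)) + 1 := by push_cast; ring
    rw [e, hper _ (int_add_mem_closedStrip hz k), ih z hz]
  | pred k ih =>
    intro z hz
    have e : (z + ((-(k : ℤ) - 1 : ℤ) : ℂ)) + 1 = z + ((-(k : ℤ) : ℤ) : ℂ) := by
      push_cast; ring
    have h1 := hper _ (int_add_mem_closedStrip hz (-(k : ℤ) - 1))
    rw [e] at h1
    rw [← h1, ih z hz]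

lemma sub_floor_mem_closedStrip {ρ : ℝ} {z : ℂ} (hz : z ∈ closedStrip ρ) :
    z - ((⌊z.re⌋ : ℤ) : ℂ) ∈ closedStrip ρ := by
  simpa [closedStrip, Set.mem_setOf_eq, Complex.sub_im, Complex.intCast_im] using hz

lemma sub_floor_mem_Kset {ρ : ℝ} {z : ℂ} (hz : z ∈ closedStrip ρ) :
    z - ((⌊z.re⌋ : ℤ) : ℂ) ∈ Kset ρ := by
  refine ⟨⟨?_, ?_⟩, ?_⟩
  · simp only [Complex.sub_re, Complex.intCast_re]
    linarith [Int.floor_le z.re]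
  · simp only [Complex.sub_re, Complex.intCast_re]
    linarith [Int.lt_floor_add_one z.re]
  · simpa [closedStrip, Complex.sub_im, Complex.intCast_im] using hz

lemma per_shift {ρ : ℝ} {f : ℂ → ℂ} (hper : ∀ z ∈ closedStrip ρ, f (z + 1) = f z)
    {z : ℂ} (hz : z ∈ closedStrip ρ) : f z = f (z - ((⌊z.re⌋ : ℤ) : ℂ)) := by
  have h1 := per_int hper ⌊z.re⌋ _ (sub_floor_mem_closedStrip hz)
  rw [sub_add_cancel] at h1
  exact h1

lemma bddAbove_abs_image {ρ : ℝ} {f : ℂ → ℂ} (hcont : ContinuousOn f (closedStrip ρ))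
    (hper : ∀ z ∈ closedStrip ρ, f (z + 1) = f z) :
    BddAbove ((fun z => ‖f z‖) '' closedStrip ρ) := by
  obtain ⟨C, hC⟩ := (isCompact_Kset ρ).exists_bound_of_continuousOn
    (hcont.mono (Kset_subset ρ))
  refine ⟨C, ?_⟩
  rintro x ⟨z, hz, rfl⟩
  simp only
  rw [per_shift hper hz]
  exact hC _ (sub_floor_mem_Kset hz)

lemma extract_subseq {ρ : ℝ} {h : ℕ → ℂ → ℂ} {B L : ℝ}
    (hcont : ∀ n, ContinuousOn (h n) (closedStrip ρ))
    (hper : ∀ n, ∀ z ∈ closedStrip ρ, h n (z + 1) = h n z)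
    (hbd : ∀ n, ∀ z ∈ closedStrip ρ, ‖h n z‖ ≤ B)
    (hlip : ∀ n, ∀ z ∈ closedStrip ρ, ∀ w ∈ closedStrip ρ,
      ‖h n z - h n w‖ ≤ L * ‖z - w‖) :
    ∃ σ : ℕ → ℕ, StrictMono σ ∧ ∃ g : ℂ → ℂ,
      (∀ z ∈ closedStrip ρ, g (z + 1) = g z) ∧
      TendstoUniformlyOn (fun n => h (σ n)) g atTop (closedStrip ρ) := by
  classical
  haveI : CompactSpace (Kset ρ) := isCompact_iff_compactSpace.mp (isCompact_Kset ρ)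
  set F : ℕ → BoundedContinuousFunction (Kset ρ) ℂ := fun n =>
    BoundedContinuousFunction.mkOfCompact
      ⟨(Kset ρ).restrict (h n), ((hcont n).mono (Kset_subset ρ)).restrict⟩ with hF
  have hFapp : ∀ n (x : Kset ρ), F n x = h n x := fun n x => rfl
  set A : Set (BoundedContinuousFunction (Kset ρ) ℂ) := Set.range F with hA
  have in_s : ∀ (u : BoundedContinuousFunction (Kset ρ) ℂ) (x : Kset ρ),
      u ∈ A → u x ∈ closedBall (0:ℂ) B := by
    rintro u x ⟨n, rfl⟩
    rw [mem_closedBall, dist_zero_right, hFapp]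
    exact hbd n _ (Kset_subset ρ x.2)
  have equi : Equicontinuous ((↑) : A → Kset ρ → ℂ) := by
    refine Metric.equicontinuous_of_continuity_modulus (fun t => L * t) ?_ _ ?_
    · have : Tendsto (fun t : ℝ => L * t) (nhds 0) (nhds (L * 0)) :=
        (tendsto_id.const_mul L)
      simpa using this
    · rintro x y ⟨u, n, rfl⟩
      rw [hFapp, hFapp, Complex.dist_eq]
      have := hlip n _ (Kset_subset ρ x.2) _ (Kset_subset ρ y.2)
      rwa [Subtype.dist_eq, Complex.dist_eq]
  have hcomp : IsCompact (closure A) :=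
    BoundedContinuousFunction.arzela_ascoli (closedBall (0:ℂ) B)
      (isCompact_closedBall 0 B) A in_s equi
  obtain ⟨G, -, σ, hσ, hGconv⟩ := hcomp.tendsto_subseq (fun n => subset_closure ⟨n, rfl⟩)
  have hunif : TendstoUniformly (fun n (x : Kset ρ) => F (σ n) x) (⇑G) atTop :=
    BoundedContinuousFunction.tendsto_iff_tendstoUniformly.mp hGconv
  refine ⟨σ, hσ, fun z => if hz : z - ((⌊z.re⌋ : ℤ) : ℂ) ∈ Kset ρ then G ⟨_, hz⟩ else 0,
    ?_, ?_⟩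
  · intro z hz
    have e : (z + 1) - ((⌊(z + 1).re⌋ : ℤ) : ℂ) = z - ((⌊z.re⌋ : ℤ) : ℂ) := by
      rw [show (z + 1).re = z.re + 1 by simp, Int.floor_add_one]
      push_cast; ring
    simp only [e]
  · rw [Metric.tendstoUniformlyOn_iff]
    intro ε hε
    rw [Metric.tendstoUniformly_iff] at hunif
    filter_upwards [hunif ε hε] with n hn z hz
    have hw : z - ((⌊z.re⌋ : ℤ) : ℂ) ∈ Kset ρ := sub_floor_mem_Kset hz
    have hgz : (if hz' : z - ((⌊z.re⌋ : ℤ) : ℂ) ∈ Kset ρ then G ⟨_, hz'⟩ else 0)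
        = G ⟨_, hw⟩ := dif_pos hw
    rw [hgz, per_shift (hper (σ n)) hz]
    exact hn ⟨_, hw⟩

lemma prod_est {a b a' b' : ℂ} {t La Lb M d : ℝ}
    (ht : 0 ≤ t) (hM : 0 ≤ M) (hd : 0 ≤ d) (hLb : 0 ≤ Lb)
    (ha : ‖a‖ ≤ t) (hb' : ‖b'‖ ≤ M)
    (hab : ‖a - a'‖ ≤ La * d) (hbb : ‖b - b'‖ ≤ Lb * d) :
    ‖a * b - a' * b'‖ ≤ (t * Lb + La * M) * d := by
  have e : a * b - a' * b' = a * (b - b') + (a - a') * b' := by ring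
  calc ‖a * b - a' * b'‖
      ≤ ‖a * (b - b')‖ + ‖(a - a') * b'‖ := by
        rw [e]; exact norm_add_le _ _
    _ = ‖a‖ * ‖b - b'‖ + ‖a - a'‖ * ‖b'‖ := by
        rw [norm_mul, norm_mul]
    _ ≤ t * (Lb * d) + (La * d) * M := by
        refine add_le_add (mul_le_mul ha hbb (norm_nonneg _) ht) ?_
        exact mul_le_mul hab hb' (norm_nonneg _) ((norm_nonneg _).trans hab)
    _ = (t * Lb + La * M) * d := by ring

end Helpers

set_option maxHeartbeats 1000000 in
/-- `P^E` maps `E_ρ` into itself and is a compact bounded linear operator on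
`E_ρ`: it is linear, bounded in the sup-norm of the strip, and the image of any
bounded sequence of `E_ρ` has a subsequence converging uniformly on the closed
strip to an element of `E_ρ`. -/
theorem stmt18 (ρ ρ' θ : ℝ) (hρ : 0 < ρ) (hρ' : ρ < ρ') (hθ0 : 0 < θ) (hθ1 : θ < 1)
    (τ : ℂ → ℂ) (hτdiff : DifferentiableOn ℂ τ (openStrip ρ'))
    (hτper : ∀ z ∈ openStrip ρ', τ (z + 2) = τ z + 1)
    (hτreal : ∀ x : ℝ, (τ x).im = 0)
    (hτderiv : ∀ z ∈ openStrip ρ', ‖deriv τ z‖ ≤ θ) :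
    (∀ f, MemE ρ f → MemE ρ (PE τ f)) ∧
    (∀ (a : ℂ) (f g : ℂ → ℂ),
      PE τ (fun z => a * f z + g z) = fun z => a * PE τ f z + PE τ g z) ∧
    (∃ C : ℝ, ∀ f, MemE ρ f → supStrip ρ (PE τ f) ≤ C * supStrip ρ f) ∧
    (∀ f : ℕ → ℂ → ℂ, (∀ n, MemE ρ (f n)) → (∀ n, supStrip ρ (f n) ≤ 1) →
      ∃ (σ : ℕ → ℕ) (g : ℂ → ℂ), StrictMono σ ∧ MemE ρ g ∧
        TendstoUniformlyOn (fun n => PE τ (f (σ n))) g atTop (closedStrip ρ)) := by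
  have hρρ'C : closedStrip ρ ⊆ openStrip ρ' := closedStrip_subset_openStrip hρ'
  have hOO : openStrip ρ ⊆ openStrip ρ' := fun z hz => lt_trans hz hρ'
  have hτ1diff : DifferentiableOn ℂ (deriv τ) (openStrip ρ') :=
    ((hτdiff.analyticOnNhd (isOpen_openStrip ρ')).deriv).differentiableOn
  have htaucont : ContinuousOn τ (closedStrip ρ) := hτdiff.continuousOn.mono hρρ'C
  have hstrip : ∀ z ∈ closedStrip ρ, |(τ z).im| ≤ θ * |z.im| :=
    fun z hz => tau_strip hρ' hρ.le hτdiff hτreal hτderiv hz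
  have hmapsC : Set.MapsTo τ (closedStrip ρ) (closedStrip ρ) := by
    intro z hz
    have h1 := hstrip z hz
    have h2 : |z.im| ≤ ρ := hz
    show |(τ z).im| ≤ ρ
    nlinarith [abs_nonneg z.im]
  have hmapsO : Set.MapsTo τ (closedStrip ρ) (openStrip ρ) := by
    intro z hz
    have h1 := hstrip z hz
    have h2 : |z.im| ≤ ρ := hz
    show |(τ z).im| < ρ
    nlinarith [abs_nonneg z.im]
  have hshiftC : Set.MapsTo (fun z : ℂ => z + 1) (closedStrip ρ) (closedStrip ρ) := by
    intro z hz
    show |(z + 1).im| ≤ ρ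
    simpa [closedStrip] using hz
  have hshiftO : Set.MapsTo (fun z : ℂ => z + 1) (openStrip ρ) (openStrip ρ) := by
    intro z hz
    show |(z + 1).im| < ρ
    simpa [openStrip] using hz
  -- Part 1
  have part1 : ∀ f, MemE ρ f → MemE ρ (PE τ f) := by
    intro f hf
    refine ⟨?_, ?_, ?_⟩
    · show ContinuousOn
        (fun z => deriv τ z * f (τ z) + deriv τ (z + 1) * f (τ (z + 1))) (closedStrip ρ)
      have c1 : ContinuousOn (deriv τ) (closedStrip ρ) := hτ1diff.continuousOn.mono hρρ'C
      have cadd : ContinuousOn (fun z : ℂ => z + 1) (closedStrip ρ) :=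
        (continuous_id.add continuous_const).continuousOn
      have c2 : ContinuousOn (fun z => f (τ z)) (closedStrip ρ) := hf.1.comp htaucont hmapsC
      have c3 : ContinuousOn (fun z => deriv τ (z + 1)) (closedStrip ρ) :=
        c1.comp cadd hshiftC
      have c4 : ContinuousOn (fun z => f (τ (z + 1))) (closedStrip ρ) :=
        c2.comp cadd hshiftC
      exact (c1.mul c2).add (c3.mul c4)
    · show DifferentiableOn ℂ
        (fun z => deriv τ z * f (τ z) + deriv τ (z + 1) * f (τ (z + 1))) (openStrip ρ)
      have hOc : openStrip ρ ⊆ closedStrip ρ := openStrip_subset_closedStrip ρ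
      have d1 : DifferentiableOn ℂ (deriv τ) (openStrip ρ) := hτ1diff.mono hOO
      have dadd : DifferentiableOn ℂ (fun z : ℂ => z + 1) (openStrip ρ) :=
        (differentiable_id.add_const 1).differentiableOn
      have d2 : DifferentiableOn ℂ (fun z => f (τ z)) (openStrip ρ) :=
        hf.2.1.comp (hτdiff.mono hOO) (fun z hz => hmapsO (hOc hz))
      have d3 : DifferentiableOn ℂ (fun z => deriv τ (z + 1)) (openStrip ρ) :=
        d1.comp dadd hshiftO
      have d4 : DifferentiableOn ℂ (fun z => f (τ (z + 1))) (openStrip ρ) :=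
        d2.comp dadd hshiftO
      exact (d1.mul d2).add (d3.mul d4)
    · intro z hz
      have hz' : z ∈ openStrip ρ' := hρρ'C hz
      show deriv τ (z + 1) * f (τ (z + 1)) + deriv τ (z + 1 + 1) * f (τ (z + 1 + 1)) =
        deriv τ z * f (τ z) + deriv τ (z + 1) * f (τ (z + 1))
      rw [show z + 1 + 1 = z + 2 by ring, tau_deriv_per hτper hz', hτper z hz',
        hf.2.2 (τ z) (hmapsC hz)]
      ring
  have hzero : (0 : ℂ) ∈ closedStrip ρ := by
    show |(0 : ℂ).im| ≤ ρ
    simpa using hρ.le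
  have habs_le : ∀ (u : ℂ → ℂ), MemE ρ u → ∀ z ∈ closedStrip ρ,
      ‖u z‖ ≤ supStrip ρ u := by
    intro u hu z hz
    exact le_csSup (bddAbove_abs_image hu.1 hu.2.2) ⟨z, hz, rfl⟩
  have hbdP : ∀ (u : ℂ → ℂ) (M : ℝ), MemE ρ u → (∀ w ∈ closedStrip ρ, ‖u w‖ ≤ M) →
      ∀ z ∈ closedStrip ρ, ‖PE τ u z‖ ≤ 2 * θ * M := by
    intro u M hu hM z hz
    have h1 : ‖deriv τ z‖ ≤ θ := hτderiv z (hρρ'C hz)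
    have h2 : ‖deriv τ (z + 1)‖ ≤ θ := hτderiv _ (hρρ'C (hshiftC hz))
    have h3 : ‖u (τ z)‖ ≤ M := hM _ (hmapsC hz)
    have h4 : ‖u (τ (z + 1))‖ ≤ M := hM _ (hmapsC (hshiftC hz))
    have hM0 : 0 ≤ M := (norm_nonneg _).trans h3
    calc ‖PE τ u z‖
        ≤ ‖deriv τ z * u (τ z)‖ + ‖deriv τ (z + 1) * u (τ (z + 1))‖ :=
          norm_add_le _ _
      _ = ‖deriv τ z‖ * ‖u (τ z)‖ +
          ‖deriv τ (z + 1)‖ * ‖u (τ (z + 1))‖ := by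
          rw [norm_mul, norm_mul]
      _ ≤ θ * M + θ * M := add_le_add
          (mul_le_mul h1 h3 (norm_nonneg _) hθ0.le)
          (mul_le_mul h2 h4 (norm_nonneg _) hθ0.le)
      _ = 2 * θ * M := by ring
  refine ⟨part1, ?_, ⟨2 * θ, ?_⟩, ?_⟩
  · intro a f g
    funext z
    simp only [PE]
    ring
  · -- boundedness
    intro f hf
    have hsup0 : 0 ≤ supStrip ρ f := (norm_nonneg _).trans (habs_le f hf 0 hzero)
    refine Real.sSup_le ?_ (by positivity)
    rintro x ⟨z, hz, rfl⟩
    simp only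
    exact hbdP f (supStrip ρ f) hf (habs_le f hf) z hz
  · -- compactness
    intro f hmem hsup
    have hmemP : ∀ n, MemE ρ (PE τ (f n)) := fun n => part1 _ (hmem n)
    have habs1 : ∀ n, ∀ w ∈ closedStrip ρ, ‖f n w‖ ≤ 1 :=
      fun n w hw => (habs_le _ (hmem n) w hw).trans (hsup n)
    set r₂ : ℝ := (1 - θ) * ρ / 2 with hr₂def
    set ρ₂ : ℝ := (1 + θ) * ρ / 2 with hρ₂def
    have h1θ : 0 < 1 - θ := by linarith
    have hr₂pos : 0 < r₂ := by rw [hr₂def]; positivity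
    have he2 : ρ₂ + r₂ = ρ := by rw [hρ₂def, hr₂def]; ring
    have hdf : ∀ n, ∀ c ∈ openStrip ρ₂, ‖deriv (f n) c‖ ≤ 1 / r₂ := by
      intro n c hc
      have hball : Metric.ball c r₂ ⊆ openStrip ρ := by
        have h := ball_subset_openStrip (c := c) (r := r₂) (a := ρ₂) hc
        rwa [he2] at h
      have hcball : Metric.closedBall c r₂ ⊆ closedStrip ρ := by
        have h := closedBall_subset_closedStrip (c := c) (r := r₂) (a := ρ₂) (le_of_lt hc)
        rwa [he2] at h
      exact cauchyBound hr₂pos ((hmem n).2.1.mono hball) ((hmem n).1.mono hcball)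
        (fun z hz => habs1 n z (hcball hz))
    have hρ₂ρ : ρ₂ < ρ := by rw [hρ₂def]; nlinarith
    have hlf : ∀ n, ∀ x ∈ openStrip ρ₂, ∀ y ∈ openStrip ρ₂,
        ‖f n y - f n x‖ ≤ (1 / r₂) * ‖y - x‖ :=
      fun n x hx y hy => lipBound (convex_openStrip ρ₂) (isOpen_openStrip ρ₂)
        ((hmem n).2.1.mono (fun z hz => lt_trans hz hρ₂ρ)) (hdf n) hx hy
    have hmaps2 : ∀ z ∈ closedStrip ρ, τ z ∈ openStrip ρ₂ := by
      intro z hz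
      have h1 := hstrip z hz
      have h2 : |z.im| ≤ ρ := hz
      show |(τ z).im| < ρ₂
      rw [hρ₂def]
      nlinarith [abs_nonneg z.im]
    have hltau : ∀ x ∈ closedStrip ρ, ∀ y ∈ closedStrip ρ,
        ‖τ y - τ x‖ ≤ θ * ‖y - x‖ :=
      fun x hx y hy => lipBound (convex_openStrip ρ') (isOpen_openStrip ρ') hτdiff hτderiv
        (hρρ'C hx) (hρρ'C hy)
    set r₁ : ℝ := (ρ' - ρ) / 4 with hr₁def
    set ρ₁ : ℝ := (ρ + ρ') / 2 with hρ₁def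
    have hr₁pos : 0 < r₁ := by rw [hr₁def]; linarith
    have hρ₁ρ' : ρ₁ + r₁ < ρ' := by rw [hρ₁def, hr₁def]; linarith
    have hττb : ∀ c ∈ openStrip ρ₁, ‖deriv (deriv τ) c‖ ≤ θ / r₁ := by
      intro c hc
      have hcball : Metric.closedBall c r₁ ⊆ openStrip ρ' :=
        (closedBall_subset_closedStrip (le_of_lt hc)).trans
          (closedStrip_subset_openStrip hρ₁ρ')
      exact cauchyBound hr₁pos (hτ1diff.mono ((Metric.ball_subset_closedBall).trans hcball))
        (hτ1diff.continuousOn.mono hcball) (fun z hz => hτderiv z (hcball hz))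
    have hρρ₁ : ρ < ρ₁ := by rw [hρ₁def]; linarith
    have hρ₁ρ'2 : ρ₁ < ρ' := by rw [hρ₁def]; linarith
    have hlτ1 : ∀ x ∈ closedStrip ρ, ∀ y ∈ closedStrip ρ,
        ‖deriv τ y - deriv τ x‖ ≤ (θ / r₁) * ‖y - x‖ :=
      fun x hx y hy => lipBound (convex_openStrip ρ₁) (isOpen_openStrip ρ₁)
        (hτ1diff.mono (fun z hz => lt_trans hz hρ₁ρ'2)) hττb
        (closedStrip_subset_openStrip hρρ₁ hx) (closedStrip_subset_openStrip hρρ₁ hy)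
    set L0 : ℝ := θ * ((1 / r₂) * θ) + (θ / r₁) * 1 with hL0def
    have hterm : ∀ n, ∀ z ∈ closedStrip ρ, ∀ w ∈ closedStrip ρ,
        ‖deriv τ z * f n (τ z) - deriv τ w * f n (τ w)‖ ≤
          L0 * ‖z - w‖ := by
      intro n z hz w hw
      have hbb : ‖f n (τ z) - f n (τ w)‖ ≤ ((1 / r₂) * θ) * ‖z - w‖ := by
        calc ‖f n (τ z) - f n (τ w)‖
            ≤ (1 / r₂) * ‖τ z - τ w‖ := hlf n _ (hmaps2 w hw) _ (hmaps2 z hz)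
          _ ≤ (1 / r₂) * (θ * ‖z - w‖) := by
              refine mul_le_mul_of_nonneg_left ?_ (by positivity)
              exact hltau w hw z hz
          _ = ((1 / r₂) * θ) * ‖z - w‖ := by ring
      have hab : ‖deriv τ z - deriv τ w‖ ≤ (θ / r₁) * ‖z - w‖ :=
        hlτ1 w hw z hz
      exact prod_est hθ0.le zero_le_one (norm_nonneg _) (by positivity)
        (hτderiv z (hρρ'C hz)) (habs1 n _ (hmapsC hw)) hab hbb
    have hlipP : ∀ n, ∀ z ∈ closedStrip ρ, ∀ w ∈ closedStrip ρ,
        ‖PE τ (f n) z - PE τ (f n) w‖ ≤ (2 * L0) * ‖z - w‖ := by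
      intro n z hz w hw
      have h1 := hterm n z hz w hw
      have h2 := hterm n (z + 1) (hshiftC hz) (w + 1) (hshiftC hw)
      rw [show (z + 1) - (w + 1) = z - w by ring] at h2
      calc ‖PE τ (f n) z - PE τ (f n) w‖
          = ‖(deriv τ z * f n (τ z) - deriv τ w * f n (τ w)) +
              (deriv τ (z + 1) * f n (τ (z + 1)) - deriv τ (w + 1) * f n (τ (w + 1)))‖ := by
            simp only [PE]; ring_nf
        _ ≤ ‖deriv τ z * f n (τ z) - deriv τ w * f n (τ w)‖ +
            ‖deriv τ (z + 1) * f n (τ (z + 1)) -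
              deriv τ (w + 1) * f n (τ (w + 1))‖ := norm_add_le _ _
        _ ≤ L0 * ‖z - w‖ + L0 * ‖z - w‖ := add_le_add h1 h2
        _ = (2 * L0) * ‖z - w‖ := by ring
    obtain ⟨σ, hσ, g, hgper, hgconv⟩ := extract_subseq (B := 2 * θ * 1)
      (fun n => (hmemP n).1) (fun n => (hmemP n).2.2)
      (fun n z hz => hbdP (f n) 1 (hmem n) (habs1 n) z hz) hlipP
    refine ⟨σ, g, hσ, ⟨?_, ?_, hgper⟩, hgconv⟩
    · exact hgconv.continuousOn (Eventually.of_forall fun n => (hmemP (σ n)).1).frequently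
    · exact (hgconv.tendstoLocallyUniformlyOn.mono
        (openStrip_subset_closedStrip ρ)).differentiableOn
        (Eventually.of_forall fun n => (hmemP (σ n)).2.1) (isOpen_openStrip ρ)
end
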